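/- arXiv:2412.05129 — 9 statements merged into one kernel-verified Lean document; each statement's English description precedes it below -/
import Mathlib

section
/- Let Z = X + iY be a symmetric 3×3 complex matrix whose imaginary part Y is positive definite. Then |det Z_j| ≥ det Y_j for j = 1, 2, where Z_j (resp. Y_j) denotes the upper-left j×j corner of Z (resp. Y). -/
/-- For `Z` in the Siegel upper half-space of degree 3 (symmetric with
positive definite imaginary part `Y`), one has `|det Z_j| ≥ det Y_j` for `j = 1, 2`,
where the subscript denotes the upper-left `j × j` corner. -/
theorem stmt_0 (Z : Matrix (Fin 3) (Fin 3) ℂ) (hsym : Z.IsSymm)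
    (hpd : (Z.map Complex.im).PosDef) :
    ∀ (j : ℕ) (hj : j ≤ 3), (j = 1 ∨ j = 2) →
      (((Z.map Complex.im).submatrix (Fin.castLE hj) (Fin.castLE hj)).det : ℝ) ≤
        ‖(Z.submatrix (Fin.castLE hj) (Fin.castLE hj)).det‖ := by
  intro j hj hcase
  rcases hcase with h1 | h2
  · subst h1
    rw [Matrix.det_fin_one, Matrix.det_fin_one]
    simp only [Matrix.submatrix_apply, Matrix.map_apply]
    calc (Z (Fin.castLE hj 0) (Fin.castLE hj 0)).im
        ≤ |(Z (Fin.castLE hj 0) (Fin.castLE hj 0)).im| := le_abs_self _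
      _ ≤ ‖Z (Fin.castLE hj 0) (Fin.castLE hj 0)‖ := Complex.abs_im_le_norm _
  · subst h2
    rw [Matrix.det_fin_two, Matrix.det_fin_two]
    simp only [Matrix.submatrix_apply, Matrix.map_apply]
    have he0 : Fin.castLE hj 0 = (0 : Fin 3) := rfl
    have he1 : Fin.castLE hj 1 = (1 : Fin 3) := rfl
    rw [he0, he1]
    have hZ10 : Z 1 0 = Z 0 1 := by
      have := congrFun (congrFun hsym 0) 1
      simpa [Matrix.transpose_apply] using this
    rw [hZ10]
    set x0 := (Z 0 0).re with hx0d
    set y0 := (Z 0 0).im with hy0d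
    set x1 := (Z 1 1).re with hx1d
    set y1 := (Z 1 1).im with hy1d
    set u := (Z 0 1).re with hud
    set v := (Z 0 1).im with hvd
    have hy0 : 0 < y0 := by
      have := hpd.dotProduct_mulVec_pos (x := Pi.single (0 : Fin 3) 1)
        (by simp [Function.ne_iff])
      simpa [Matrix.mulVec, dotProduct, Pi.single_apply, Fin.sum_univ_three,
        Matrix.map_apply] using this
    have hd : 0 < y0 * y1 - v * v := by
      have hv : (![v, -y0, 0] : Fin 3 → ℝ) ≠ 0 := by
        intro h
        have := congrFun h 1
        simp at this
        exact hy0.ne' this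
      have h2 := hpd.dotProduct_mulVec_pos (x := ![v, -y0, 0]) hv
      have hZ10' : (Z 1 0).im = v := by rw [hZ10]
      have expand : dotProduct (![v, -y0, 0] : Fin 3 → ℝ)
          ((Z.map Complex.im).mulVec ![v, -y0, 0]) =
          y0 * (y0 * y1 - v * v) := by
        simp [Matrix.mulVec, dotProduct, Fin.sum_univ_three, Matrix.map_apply,
          hZ10']
        ring
      rw [star_trivial, expand] at h2
      nlinarith [h2, hy0]
    set w := Z 0 0 * Z 1 1 - Z 0 1 * Z 0 1 with hw
    have hre : w.re = x0 * x1 - y0 * y1 - (u * u - v * v) := by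
      simp [hw, Complex.mul_re]; try ring
    have him : w.im = x0 * y1 + y0 * x1 - 2 * (u * v) := by
      simp [hw, Complex.mul_im]; try ring
    have key : (y0 * y1 - v * v) ^ 2 ≤ ‖w‖ ^ 2 := by
      rw [Complex.sq_norm, Complex.normSq_apply, hre, him]
      nlinarith [mul_pos hy0 hy0, hd, sq_nonneg ((y0 * y1 - v * v) * x0),
        mul_nonneg hd.le (sq_nonneg (u * y0 - v * x0)),
        sq_nonneg (x1 * y0 ^ 2 - 2 * u * v * y0 + v ^ 2 * x0),
        sq_nonneg ((x0 * x1 - u * u) * y0)]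
    nlinarith [key, hd, norm_nonneg w]
end

section
/- Let M = ((a,b),(b,c)) be a symmetric 2×2 complex matrix whose imaginary part is positive definite. Then c ≠ 0, b² − ac ≠ 0, Im(a − b²/c) > 0, and Im(c/(b² − ac)) > 0. -/
/-- If `M = ((a,b),(b,c))` is a symmetric 2×2 complex matrix with
positive definite imaginary part, then `c ≠ 0`, `b² − ac ≠ 0`, `Im(a − b²/c) > 0`,
and `Im(c/(b² − ac)) > 0`. -/
theorem stmt_2 (a b c : ℂ) (hpd : (!![a.im, b.im; b.im, c.im]).PosDef) :
    c ≠ 0 ∧ b ^ 2 - a * c ≠ 0 ∧ 0 < (a - b ^ 2 / c).im ∧ 0 < (c / (b ^ 2 - a * c)).im := by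
  have hA : 0 < a.im := by
    have := hpd.dotProduct_mulVec_pos (x := ![1, 0]) (by
      intro h
      have := congrFun h 0
      simp at this)
    simpa [Matrix.mulVec, dotProduct, Fin.sum_univ_two] using this
  have hC : 0 < c.im := by
    have := hpd.dotProduct_mulVec_pos (x := ![0, 1]) (by
      intro h
      have := congrFun h 1
      simp at this)
    simpa [Matrix.mulVec, dotProduct, Fin.sum_univ_two] using this
  have hdet : 0 < a.im * c.im - b.im * b.im := by
    have := hpd.det_pos
    simpa [Matrix.det_fin_two_of] using this
  have hc : c ≠ 0 := by
    intro h
    rw [h] at hC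
    simp at hC
  have hns : 0 < Complex.normSq c := Complex.normSq_pos.mpr hc
  set z : ℂ := (a * c - b ^ 2) / c with hz
  have key : 0 < z.im := by
    rw [hz, Complex.div_im, div_sub_div_same]
    apply div_pos _ hns
    have h1 : (a * c - b ^ 2).im = a.re * c.im + a.im * c.re - 2 * b.re * b.im := by
      simp [Complex.sub_im, Complex.mul_im, pow_two]; ring
    have h2 : (a * c - b ^ 2).re = a.re * c.re - a.im * c.im - (b.re * b.re - b.im * b.im) := by
      simp [Complex.sub_re, Complex.mul_re, pow_two]
    rw [h1, h2]
    nlinarith [sq_nonneg (a.im * c.re - b.re * b.im), mul_pos hdet (mul_pos hA hC),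
      mul_pos hA hC, sq_nonneg b.re, mul_pos hdet hA, sq_nonneg (b.re * c.im)]
  have hnz : b ^ 2 - a * c ≠ 0 := by
    intro h
    have hac : a * c - b ^ 2 = 0 := by linear_combination -h
    rw [hz, hac] at key
    simp at key
  refine ⟨hc, hnz, ?_, ?_⟩
  · have : a - b ^ 2 / c = z := by
      rw [hz]; field_simp
    rw [this]; exact key
  · have hzne : z ≠ 0 := by
      intro h
      rw [h] at key; simp at key
    have : c / (b ^ 2 - a * c) = -z⁻¹ := by
      rw [hz, inv_div, show b ^ 2 - a * c = -(a * c - b ^ 2) by ring, div_neg]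
    rw [this, Complex.neg_im, Complex.inv_im, neg_div, neg_neg]
    exact div_pos key (Complex.normSq_pos.mpr hzne)
end

section
/- Let M = ((a,b),(b,c)) be a symmetric 2×2 complex matrix whose imaginary part is positive definite. Then b² − ac ∉ (−∞,0], (b²−ac)/c ∉ (−∞,0], and for every s ∈ ℂ one has ((b²−ac)/c)^s = (b²−ac)^s · c^{−s}, where all powers are principal-branch powers. -/
/-- If `M = ((a,b),(b,c))` is a symmetric 2×2 complex matrix with positive
definite imaginary part, then `b² − ac` and `(b²−ac)/c` lie off the cut `(−∞,0]`
(i.e. in the slit plane), and for every `s ∈ ℂ` one has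
`((b²−ac)/c)^s = (b²−ac)^s · c^{−s}` for principal-branch powers. -/
theorem stmt_3 (a b c : ℂ) (hpd : (!![a.im, b.im; b.im, c.im]).PosDef) :
    b ^ 2 - a * c ∈ Complex.slitPlane ∧ (b ^ 2 - a * c) / c ∈ Complex.slitPlane ∧
    ∀ s : ℂ, ((b ^ 2 - a * c) / c) ^ s = (b ^ 2 - a * c) ^ s * c ^ (-s) := by
  have hA : 0 < a.im := by
    have := hpd.dotProduct_mulVec_pos (x := ![(1 : ℝ), 0]) (by simp [Function.ne_iff])
    simpa [Matrix.mulVec, dotProduct, Fin.sum_univ_two] using this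
  have hC : 0 < c.im := by
    have := hpd.dotProduct_mulVec_pos (x := ![(0 : ℝ), 1]) (by simp [Function.ne_iff])
    simpa [Matrix.mulVec, dotProduct, Fin.sum_univ_two] using this
  have hdet : 0 < a.im * c.im - b.im * b.im := by
    have := hpd.det_pos
    simpa [Matrix.det_fin_two_of] using this
  set D : ℂ := b ^ 2 - a * c with hD
  have hDre : D.re = b.re ^ 2 - b.im ^ 2 - (a.re * c.re - a.im * c.im) := by
    simp [hD, Complex.mul_re, pow_two]
  have hDim : D.im = 2 * b.re * b.im - (a.re * c.im + c.re * a.im) := by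
    simp [hD, Complex.mul_im, pow_two]; ring
  have hc0 : c ≠ 0 := by
    intro h; rw [h] at hC; simp at hC
  -- D ∈ slitPlane
  have h1 : D ∈ Complex.slitPlane := by
    rw [Complex.mem_slitPlane_iff]
    by_cases him : D.im = 0
    · left
      rw [hDre]
      rw [hDim] at him
      have hfin : a.re * c.re * (a.im * c.im) ≤ (b.re * b.im) ^ 2 := by
        have h1 : a.re * c.re * (a.im * c.im) =
            a.re * c.im * (2 * b.re * b.im - a.re * c.im) := by
          have : c.re * a.im = 2 * b.re * b.im - a.re * c.im := by linarith
          calc a.re * c.re * (a.im * c.im) = a.re * c.im * (c.re * a.im) := by ring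
            _ = a.re * c.im * (2 * b.re * b.im - a.re * c.im) := by rw [this]
        rw [h1]
        nlinarith [sq_nonneg (a.re * c.im - b.re * b.im)]
      nlinarith [hfin, mul_pos hA hC, hdet,
        mul_pos hdet (show (0:ℝ) < b.re ^ 2 + a.im * c.im by positivity)]
    · right; exact him
  -- Im (D / c) < 0
  have h2im : (D / c).im < 0 := by
    rw [Complex.div_im]
    have hns : 0 < Complex.normSq c := by
      simpa [Complex.normSq_pos] using hc0
    have key : D.im * c.re - D.re * c.im < 0 := by
      rw [hDre, hDim]
      nlinarith [sq_nonneg (a.im * c.re - b.im * b.re), mul_pos hC hdet, hA, hC]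
    have : (D.im * c.re - D.re * c.im) / Complex.normSq c < 0 :=
      div_neg_of_neg_of_pos key hns
    calc D.im * c.re / Complex.normSq c - D.re * c.im / Complex.normSq c
        = (D.im * c.re - D.re * c.im) / Complex.normSq c := by ring
      _ < 0 := this
  have h2 : D / c ∈ Complex.slitPlane := by
    rw [Complex.mem_slitPlane_iff]; right; exact ne_of_lt h2im
  refine ⟨h1, h2, fun s => ?_⟩
  have hDne : D ≠ 0 := Complex.slitPlane_ne_zero h1
  have hx0 : D / c ≠ 0 := div_ne_zero hDne hc0
  -- arg facts
  have hargc_pos : 0 < Complex.arg c := by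
    rcases lt_trichotomy (Complex.arg c) 0 with h | h | h
    · exact absurd (Complex.arg_neg_iff.mp h) (by linarith)
    · rw [Complex.arg_eq_zero_iff] at h; linarith [h.2, hC]
    · exact h
  have hargc_lt : Complex.arg c < Real.pi :=
    Complex.arg_lt_pi_iff.mpr (Or.inr (by intro h; rw [h] at hC; exact lt_irrefl 0 hC))
  have hargx_neg : Complex.arg (D / c) < 0 := Complex.arg_neg_iff.mpr h2im
  have hlog : Complex.log (D / c * c) = Complex.log (D / c) + Complex.log c := by
    apply Complex.log_mul hx0 hc0
    constructor
    · have := Complex.neg_pi_lt_arg (D / c)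
      linarith
    · linarith
  have hmul : D / c * c = D := div_mul_cancel₀ D hc0
  have hDs : D ^ s = (D / c) ^ s * c ^ s := by
    rw [Complex.cpow_def_of_ne_zero hDne, Complex.cpow_def_of_ne_zero hx0,
      Complex.cpow_def_of_ne_zero hc0, ← Complex.exp_add, ← add_mul, ← hlog, hmul]
  have hcs : c ^ s ≠ 0 := by
    rw [Complex.cpow_def_of_ne_zero hc0]; exact Complex.exp_ne_zero _
  rw [Complex.cpow_neg, hDs]
  field_simp
end

section
/- Let Z be a symmetric 2×2 complex matrix whose imaginary part is positive definite. Then det Z ∉ [0,∞); equivalently, −det Z lies in ℂ ∖ (−∞,0]. -/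
/-- If `Z` is a symmetric 2×2 complex matrix with positive definite
imaginary part, then `det Z ∉ [0,∞)`; equivalently, `−det Z` lies in `ℂ ∖ (−∞,0]`
(the slit plane). -/
theorem stmt_4 (Z : Matrix (Fin 2) (Fin 2) ℂ) (hsym : Z.IsSymm)
    (hpd : (Z.map Complex.im).PosDef) :
    (¬ ∃ r : ℝ, 0 ≤ r ∧ Z.det = (r : ℂ)) ∧ -Z.det ∈ Complex.slitPlane := by
  have hba : Z 1 0 = Z 0 1 := hsym.apply 0 1
  have ha2 : 0 < (Z 0 0).im := by
    have h := hpd.diag_pos (i := 0)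
    simpa [Matrix.map_apply] using h
  have hdY : 0 < (Z 0 0).im * (Z 1 1).im - (Z 0 1).im * (Z 0 1).im := by
    have h := hpd.det_pos
    rw [Matrix.det_fin_two] at h
    simpa [Matrix.map_apply, hba] using h
  have hdet : Z.det = Z 0 0 * Z 1 1 - Z 0 1 * Z 0 1 := by
    rw [Matrix.det_fin_two, hba]
  set a := Z 0 0
  set b := Z 0 1
  set c := Z 1 1
  have hre : Z.det.re = a.re * c.re - a.im * c.im - (b.re * b.re - b.im * b.im) := by
    rw [hdet]; simp [Complex.sub_re, Complex.mul_re]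
  have him : Z.det.im = a.re * c.im + a.im * c.re - (b.re * b.im + b.im * b.re) := by
    rw [hdet]; simp [Complex.sub_im, Complex.mul_im]
  have key : Z.det.im = 0 → Z.det.re < 0 := by
    intro h0
    rw [him] at h0
    rw [hre]
    have hc2 : 0 < c.im := by nlinarith [sq_nonneg b.im]
    have hac : 0 < a.im * c.im := mul_pos ha2 hc2
    have hid : (a.re * c.re - a.im * c.im - (b.re * b.re - b.im * b.im)) * (a.im * c.im)
        = -(a.re * c.im - b.re * b.im) ^ 2 - b.re ^ 2 * (a.im * c.im - b.im * b.im)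
          - (a.im * c.im) * (a.im * c.im - b.im * b.im)
          + (a.re * c.im) * (a.re * c.im + a.im * c.re - (b.re * b.im + b.im * b.re)) := by
      ring
    rw [h0, mul_zero] at hid
    have hneg : (a.re * c.re - a.im * c.im - (b.re * b.re - b.im * b.im)) * (a.im * c.im) < 0 := by
      rw [hid]
      have h1 := sq_nonneg (a.re * c.im - b.re * b.im)
      have h2 : 0 ≤ b.re ^ 2 * (a.im * c.im - b.im * b.im) :=
        mul_nonneg (sq_nonneg _) (by linarith)
      nlinarith [mul_pos hac hdY]
    nlinarith [hneg, hac]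
  constructor
  · rintro ⟨r, hr, hZr⟩
    have him0 : Z.det.im = 0 := by rw [hZr]; simp
    have := key him0
    rw [hZr] at this
    simp at this
    linarith
  · rw [Complex.mem_slitPlane_iff]
    by_cases h : Z.det.im = 0
    · left; simp [key h]
    · right; simpa using h
end

section
/- Let Z = ((τ₁, z₁, z₂), (z₁, τ₂, z₃), (z₂, z₃, τ₃)) be a symmetric 3×3 complex matrix whose imaginary part is positive definite. Then τ₃ ≠ 0, τ₂τ₃ − z₃² ≠ 0, the identity τ₁ − z₂²/τ₃ − (τ₃z₁ − z₂z₃)²/(τ₃(τ₂τ₃ − z₃²)) = det Z/(τ₂τ₃ − z₃²) holds, and Im(det Z/(τ₂τ₃ − z₃²)) > 0. -/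
open Complex in
private lemma im_quad (τ₁ z₁ z₂ τ₂ z₃ τ₃ a b c : ℂ) :
    ((starRingEnd ℂ) a * (τ₁ * a + z₁ * b + z₂ * c) +
     (starRingEnd ℂ) b * (z₁ * a + τ₂ * b + z₃ * c) +
     (starRingEnd ℂ) c * (z₂ * a + z₃ * b + τ₃ * c)).im
    = (a.re * (τ₁.im * a.re + z₁.im * b.re + z₂.im * c.re) +
       b.re * (z₁.im * a.re + τ₂.im * b.re + z₃.im * c.re) +
       c.re * (z₂.im * a.re + z₃.im * b.re + τ₃.im * c.re))
    + (a.im * (τ₁.im * a.im + z₁.im * b.im + z₂.im * c.im) +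
       b.im * (z₁.im * a.im + τ₂.im * b.im + z₃.im * c.im) +
       c.im * (z₂.im * a.im + z₃.im * b.im + τ₃.im * c.im)) := by
  simp [Complex.add_im, Complex.mul_im, Complex.mul_re]
  ring

/-- For `Z = ((τ₁,z₁,z₂),(z₁,τ₂,z₃),(z₂,z₃,τ₃))` in the Siegel upper
half-space of degree 3: `τ₃ ≠ 0`, `τ₂τ₃ − z₃² ≠ 0`,
`τ₁ − z₂²/τ₃ − (τ₃z₁ − z₂z₃)²/(τ₃(τ₂τ₃ − z₃²)) = det Z/(τ₂τ₃ − z₃²)`, and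
`Im(det Z/(τ₂τ₃ − z₃²)) > 0`. -/
theorem stmt_5 (τ₁ z₁ z₂ τ₂ z₃ τ₃ : ℂ)
    (hpd : ((!![τ₁, z₁, z₂; z₁, τ₂, z₃; z₂, z₃, τ₃]).map Complex.im).PosDef) :
    τ₃ ≠ 0 ∧ τ₂ * τ₃ - z₃ ^ 2 ≠ 0 ∧
    τ₁ - z₂ ^ 2 / τ₃ - (τ₃ * z₁ - z₂ * z₃) ^ 2 / (τ₃ * (τ₂ * τ₃ - z₃ ^ 2)) =
      (!![τ₁, z₁, z₂; z₁, τ₂, z₃; z₂, z₃, τ₃]).det / (τ₂ * τ₃ - z₃ ^ 2) ∧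
    0 < ((!![τ₁, z₁, z₂; z₁, τ₂, z₃; z₂, z₃, τ₃]).det / (τ₂ * τ₃ - z₃ ^ 2)).im := by
  -- the quadratic form of the imaginary part
  have hq : ∀ x y z : ℝ, ![x, y, z] ≠ 0 →
      0 < x * (τ₁.im * x + z₁.im * y + z₂.im * z) + y * (z₁.im * x + τ₂.im * y + z₃.im * z) +
        z * (z₂.im * x + z₃.im * y + τ₃.im * z) := by
    intro x y z h
    have := hpd.dotProduct_mulVec_pos h
    simpa [dotProduct, Matrix.mulVec, Fin.sum_univ_three, Matrix.map_apply] using this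
  have hq0 : ∀ x y z : ℝ,
      0 ≤ x * (τ₁.im * x + z₁.im * y + z₂.im * z) + y * (z₁.im * x + τ₂.im * y + z₃.im * z) +
        z * (z₂.im * x + z₃.im * y + τ₃.im * z) := by
    intro x y z
    have := hpd.posSemidef.dotProduct_mulVec_nonneg ![x, y, z]
    simpa [dotProduct, Matrix.mulVec, Fin.sum_univ_three, Matrix.map_apply] using this
  have hτ₃im : 0 < τ₃.im := by
    have := hq 0 0 1 (by intro h; simpa using congrFun h 2)
    simpa using this
  have hτ₃ : τ₃ ≠ 0 := by
    intro h; rw [h] at hτ₃im; simp at hτ₃im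
  set d : ℂ := τ₂ * τ₃ - z₃ ^ 2 with hd
  have hdne : d ≠ 0 := by
    intro h0
    -- use vector (0, τ₃, -z₃)
    have hrow := im_quad τ₁ z₁ z₂ τ₂ z₃ τ₃ 0 τ₃ (-z₃)
    have hval : (starRingEnd ℂ) 0 * (τ₁ * 0 + z₁ * τ₃ + z₂ * (-z₃)) +
        (starRingEnd ℂ) τ₃ * (z₁ * 0 + τ₂ * τ₃ + z₃ * (-z₃)) +
        (starRingEnd ℂ) (-z₃) * (z₂ * 0 + z₃ * τ₃ + τ₃ * (-z₃)) = (starRingEnd ℂ) τ₃ * d := by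
      rw [hd]; simp only [map_zero, zero_mul, mul_zero, zero_add]; ring
    rw [hval, h0, mul_zero] at hrow
    have h1 := hq 0 τ₃.im (-z₃).im (by
      intro h; have := congrFun h 1; simp at this; exact hτ₃im.ne' this)
    have h2 := hq0 0 τ₃.re (-z₃).re
    simp only [Complex.neg_im, Complex.neg_re, Complex.zero_im, Complex.zero_re] at h1 h2 hrow
    ring_nf at h1 h2 hrow
    linarith [h1, h2, hrow]
  have hτd : τ₃ * d ≠ 0 := mul_ne_zero hτ₃ hdne
  have hdet : (!![τ₁, z₁, z₂; z₁, τ₂, z₃; z₂, z₃, τ₃]).det =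
      τ₁ * (τ₂ * τ₃ - z₃ ^ 2) - z₁ * (z₁ * τ₃ - z₃ * z₂) + z₂ * (z₁ * z₃ - τ₂ * z₂) := by
    simp [Matrix.det_fin_three]; ring
  refine ⟨hτ₃, hdne, ?_, ?_⟩
  · rw [hdet]
    field_simp
    ring
  · -- u = (1, a, b) with W (a,b)ᵀ = -(z₁, z₂)ᵀ
    set a : ℂ := -(τ₃ * z₁ - z₂ * z₃) / d with ha
    set b : ℂ := -(τ₂ * z₂ - z₃ * z₁) / d with hb
    have hd' : τ₂ * τ₃ - z₃ ^ 2 ≠ 0 := hdne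
    have h1 : z₁ * 1 + τ₂ * a + z₃ * b = 0 := by
      rw [ha, hb, hd]; field_simp; ring
    have h2 : z₂ * 1 + z₃ * a + τ₃ * b = 0 := by
      rw [ha, hb, hd]; linear_combination (-z₂) * mul_inv_cancel₀ hd'
    have hS : (starRingEnd ℂ) 1 * (τ₁ * 1 + z₁ * a + z₂ * b) +
        (starRingEnd ℂ) a * (z₁ * 1 + τ₂ * a + z₃ * b) +
        (starRingEnd ℂ) b * (z₂ * 1 + z₃ * a + τ₃ * b) =
        (!![τ₁, z₁, z₂; z₁, τ₂, z₃; z₂, z₃, τ₃]).det / d := by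
      rw [h1, h2, hdet, ha, hb, hd]
      simp only [mul_zero, add_zero, map_one, one_mul, mul_one]
      linear_combination (-τ₁) * mul_inv_cancel₀ hd'
    have hrow := im_quad τ₁ z₁ z₂ τ₂ z₃ τ₃ 1 a b
    rw [hS] at hrow
    have hpos := hq 1 a.re b.re (by intro h; simpa using congrFun h 0)
    have hnn := hq0 0 a.im b.im
    rw [hrow]
    simp only [Complex.one_re, Complex.one_im] at *
    nlinarith [hpos, hnn]
end

section
/- Let ((τ₂, z₃), (z₃, τ₃)) be a symmetric 2×2 complex matrix whose imaginary part is positive definite, and let w, u ∈ ℂ with Re(w+u) > 1/2. Then ∫₀^∞ t₂^{2(w+u)−2} e^{2πiτ₂t₂²} (∫_ℝ e^{2πi(τ₃t₆² + 2z₃t₂t₆)} dt₆) dt₂ = (√π·i/2) · (2πi)^{−(w+u)} · (z₃² − τ₂τ₃)^{1/2−w−u} · τ₃^{w+u−1} · Γ(w+u−1/2), where all complex powers are principal-branch powers. -/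
open MeasureTheory Set
open Complex Filter

lemma integrableOn_cpow_exp {s a : ℂ} (hs : 0 < s.re) (ha : 0 < a.re) :
    IntegrableOn (fun t : ℝ => (t:ℂ)^(s-1) * Complex.exp (-(a*t))) (Ioi 0) := by
  have hbound := integrableOn_rpow_mul_exp_neg_mul_rpow (p := 1) (s := s.re - 1) (b := a.re)
    (by linarith) one_pos ha
  refine hbound.integrable.mono' ?_ ?_
  · apply ContinuousOn.aestronglyMeasurable ?_ measurableSet_Ioi
    refine ContinuousOn.mul ?_ ?_
    · refine ContinuousOn.cpow ?_ continuousOn_const ?_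
      · exact Complex.continuous_ofReal.continuousOn
      · intro t ht
        exact Complex.mem_slitPlane_iff.2 (Or.inl (by simpa using (mem_Ioi.1 ht)))
    · exact (Complex.continuous_exp.comp (by continuity)).continuousOn
  · filter_upwards [ae_restrict_mem measurableSet_Ioi] with t ht
    rw [mem_Ioi] at ht
    rw [norm_mul,
      Complex.norm_cpow_eq_rpow_re_of_pos ht, Complex.norm_exp]
    simp only [sub_re, one_re, neg_re, mul_re, ofReal_re, ofReal_im, mul_zero, sub_zero,
      Real.rpow_one]
    ring_nf
    exact le_of_eq (by ring_nf)

lemma cpow_exp_integral {s : ℂ} (hs : 0 < s.re) :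
    ∀ {a : ℂ}, 0 < a.re →
      ∫ t in Ioi (0:ℝ), (t:ℂ)^(s-1) * Complex.exp (-(a*t)) = a^(-s) * Complex.Gamma s := by
  set U : Set ℂ := {z | 0 < z.re} with hU
  have hUopen : IsOpen U := isOpen_lt continuous_const Complex.continuous_re
  have hUconn : IsPreconnected U := (convex_halfSpace_re_gt 0).isPreconnected
  set F : ℂ → ℂ := fun a => ∫ t in Ioi (0:ℝ), (t:ℂ)^(s-1) * Complex.exp (-(a*t)) with hF
  set G : ℂ → ℂ := fun a => a^(-s) * Complex.Gamma s with hG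
  suffices hEq : EqOn F G U by intro a ha; exact hEq ha
  have hFdiff : DifferentiableOn ℂ F U := by
    intro a₀ ha₀
    have ha₀' : 0 < a₀.re := ha₀
    set ε : ℝ := a₀.re / 2 with hε
    have hεpos : 0 < ε := by positivity
    have key := hasDerivAt_integral_of_dominated_loc_of_deriv_le (μ := volume.restrict (Ioi 0))
      (F := fun (x : ℂ) (t : ℝ) => (t:ℂ)^(s-1) * Complex.exp (-(x*t)))
      (F' := fun (x : ℂ) (t : ℝ) => (t:ℂ)^(s-1) * (Complex.exp (-(x*t)) * (-(t:ℂ))))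
      (x₀ := a₀) (bound := fun t : ℝ => t ^ s.re * Real.exp (-ε * t)) (Metric.ball_mem_nhds a₀ hεpos) ?_ ?_ ?_ ?_ ?_ ?_
    · exact (key.2.differentiableAt).differentiableWithinAt
    · filter_upwards with x
      apply ContinuousOn.aestronglyMeasurable ?_ measurableSet_Ioi
      refine ContinuousOn.mul ?_ ((Complex.continuous_exp.comp (by continuity)).continuousOn)
      refine ContinuousOn.cpow Complex.continuous_ofReal.continuousOn continuousOn_const ?_
      intro t ht; exact Complex.mem_slitPlane_iff.2 (Or.inl (by simpa using (mem_Ioi.1 ht)))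
    · exact integrableOn_cpow_exp hs ha₀'
    · apply ContinuousOn.aestronglyMeasurable ?_ measurableSet_Ioi
      refine ContinuousOn.mul ?_ ?_
      · refine ContinuousOn.cpow Complex.continuous_ofReal.continuousOn continuousOn_const ?_
        intro t ht; exact Complex.mem_slitPlane_iff.2 (Or.inl (by simpa using (mem_Ioi.1 ht)))
      · exact ((Complex.continuous_exp.comp (by continuity)).mul (by continuity)).continuousOn
    · filter_upwards [ae_restrict_mem measurableSet_Ioi] with t ht x hx
      rw [mem_Ioi] at ht
      have hxre : ε ≤ x.re := by
        have hlt : ‖x - a₀‖ < ε := by simpa [Metric.mem_ball, dist_eq_norm] using hx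
        have h1 : |x.re - a₀.re| ≤ ‖x - a₀‖ := by
          simpa [Complex.sub_re] using Complex.abs_re_le_norm (x - a₀)
        have h2 := (abs_le.1 (le_of_lt (lt_of_le_of_lt h1 hlt))).1
        rw [hε] at h2 ⊢; linarith
      rw [norm_mul, norm_mul,
        Complex.norm_cpow_eq_rpow_re_of_pos ht, Complex.norm_exp]
      simp only [sub_re, one_re, neg_re, mul_re, ofReal_re, ofReal_im, mul_zero, sub_zero,
        norm_neg, Complex.norm_real, Real.norm_eq_abs, abs_of_pos ht]
      have hexp : Real.exp (-(x.re * t)) ≤ Real.exp (-ε * t) := by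
        apply Real.exp_le_exp.2; nlinarith
      have h3 : (0:ℝ) ≤ t ^ (s.re - 1) := (Real.rpow_pos_of_pos ht _).le
      have h5 : t ^ (s.re - 1) * t = t ^ s.re := by
        rw [← Real.rpow_add_one ht.ne' (s.re - 1)]; ring_nf
      calc t ^ (s.re - 1) * (Real.exp (-(x.re * t)) * t)
          = t ^ (s.re - 1) * t * Real.exp (-(x.re * t)) := by ring
        _ ≤ t ^ (s.re - 1) * t * Real.exp (-ε * t) :=
            mul_le_mul_of_nonneg_left hexp (mul_nonneg h3 ht.le)
        _ = t ^ s.re * Real.exp (-ε * t) := by rw [h5]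
    · have := integrableOn_rpow_mul_exp_neg_mul_rpow (p := 1) (s := s.re) (b := ε)
        (by linarith) one_pos hεpos
      apply this.integrable.congr
      filter_upwards with t
      simp [Real.rpow_one]
    · filter_upwards [ae_restrict_mem measurableSet_Ioi] with t ht x hx
      have : HasDerivAt (fun x : ℂ => Complex.exp (-(x*t))) (Complex.exp (-(x*t)) * (-(t:ℂ))) x := by
        have h1 : HasDerivAt (fun x : ℂ => -(x*(t:ℂ))) (-(t:ℂ)) x := by
          exact (hasDerivAt_mul_const (t:ℂ)).neg
        simpa using h1.cexp
      exact this.const_mul _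
  have hGdiff : DifferentiableOn ℂ G U := by
    intro a ha
    have ha' : 0 < a.re := ha
    have : DifferentiableAt ℂ (fun z : ℂ => z ^ (-s)) a := by
      apply DifferentiableAt.cpow differentiableAt_id (differentiableAt_const _)
      exact Complex.mem_slitPlane_iff.2 (Or.inl ha')
    exact ((this.mul_const _).differentiableWithinAt)
  have hfreq : ∃ᶠ z in nhdsWithin (1:ℂ) {(1:ℂ)}ᶜ, F z = G z := by
    have hreal : ∀ r : ℝ, 0 < r → F (r:ℂ) = G (r:ℂ) := by
      intro r hr
      have h1 := integral_cpow_mul_exp_neg_mul_Ioi hs hr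
      have hr0 : ((r:ℂ)) ≠ 0 := by exact_mod_cast hr.ne'
      have harg : (r:ℂ).arg ≠ Real.pi := by
        rw [Complex.arg_ofReal_of_nonneg hr.le]; exact (Real.pi_ne_zero).symm
      simp only [hF, hG]
      rw [h1, one_div, Complex.inv_cpow _ _ harg, ← Complex.cpow_neg]
    have htend : Tendsto (fun n : ℕ => ((1 + ((n:ℝ)+1)⁻¹ : ℝ) : ℂ)) atTop
        (nhdsWithin (1:ℂ) {(1:ℂ)}ᶜ) := by
      rw [tendsto_nhdsWithin_iff]
      constructor
      · have : Tendsto (fun n : ℕ => (1 + ((n:ℝ)+1)⁻¹ : ℝ)) atTop (nhds 1) := by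
          simpa using (tendsto_const_nhds (x := (1:ℝ))).add (tendsto_one_div_add_atTop_nhds_zero_nat)
        have h2 := (Complex.continuous_ofReal.tendsto (1:ℝ)).comp this
        have heq : (Complex.ofReal ∘ fun n : ℕ => (1 + ((n:ℝ)+1)⁻¹ : ℝ)) =
            fun n : ℕ => ((1 + ((n:ℝ)+1)⁻¹ : ℝ) : ℂ) := rfl
        rw [heq] at h2
        simpa using h2
      · filter_upwards with n
        simp only [mem_compl_iff, mem_singleton_iff]
        intro hcontra
        have : (1 + ((n:ℝ)+1)⁻¹ : ℝ) = 1 := by exact_mod_cast hcontra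
        have hpos : (0:ℝ) < ((n:ℝ)+1)⁻¹ := by positivity
        linarith
    apply htend.frequently
    apply Frequently.of_forall
    intro n
    exact hreal _ (by positivity)
  exact hFdiff.analyticOnNhd hUopen |>.eqOn_of_preconnected_of_frequently_eq
    (hGdiff.analyticOnNhd hUopen) hUconn (show (1:ℂ) ∈ U by simp [hU]) hfreq

lemma cpow_exp_sq_integral {s b : ℂ} (hs : 1/2 < s.re) (hb : 0 < b.re) :
    ∫ t in Ioi (0:ℝ), (t:ℂ)^(2*s-2) * Complex.exp (-(b*(t:ℂ)^2)) =
      b ^ (1/2 - s) * Complex.Gamma (s - 1/2) / 2 := by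
  have hs' : 0 < (s - 1/2).re := by
    have h12 : ((1/2 : ℂ)).re = 1/2 := by norm_num
    rw [Complex.sub_re, h12]; linarith
  have hmain := cpow_exp_integral hs' hb
  set g : ℝ → ℂ := fun y => (y:ℂ)^(s - 3/2) * Complex.exp (-(b*y)) with hg
  have h2 := MeasureTheory.integral_comp_rpow_Ioi g (p := 2) two_ne_zero
  have hleft : ∫ x in Ioi (0:ℝ), (|(2:ℝ)| * x ^ ((2:ℝ) - 1)) • g (x ^ (2:ℝ)) =
      2 * ∫ t in Ioi (0:ℝ), (t:ℂ)^(2*s-2) * Complex.exp (-(b*(t:ℂ)^2)) := by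
    rw [← integral_const_mul]
    apply MeasureTheory.setIntegral_congr_fun measurableSet_Ioi
    intro x hx
    rw [mem_Ioi] at hx
    have hx0 : (x:ℂ) ≠ 0 := by exact_mod_cast hx.ne'
    have hxsq : ((x ^ (2:ℝ) : ℝ) : ℂ) = (x:ℂ)^(2:ℕ) := by
      rw [Real.rpow_two]; push_cast; ring
    simp only [hg, abs_of_pos (by norm_num : (0:ℝ) < 2), hxsq]
    norm_num
    have hpow : ((x:ℂ)^(2:ℕ)) ^ (s - 3/2) = (x:ℂ) ^ (2*(s - 3/2)) := by
      rw [Complex.cpow_ofNat_mul']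
      · rw [Complex.arg_ofReal_of_nonneg hx.le]; simpa using Real.pi_pos
      · rw [Complex.arg_ofReal_of_nonneg hx.le]; simpa using Real.pi_pos.le
    have hxx : (x:ℂ) * (x:ℂ) ^ (2*(s-3/2)) = (x:ℂ) ^ (2*s - 2) := by
      have : (x:ℂ) ^ (2*s - 2) = (x:ℂ) ^ ((1:ℂ) + (2*(s-3/2))) := by ring_nf
      rw [this, Complex.cpow_add _ _ hx0, Complex.cpow_one]
    have hcoe : ((x ^ (2:ℝ) : ℝ) : ℂ) = (x:ℂ)^(2:ℕ) := hxsq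
    rw [hpow]
    calc 2 * (x:ℂ) * ((x:ℂ) ^ (2*(s-3/2)) * Complex.exp (-(b * (x:ℂ)^2)))
        = 2 * (((x:ℂ) * (x:ℂ) ^ (2*(s-3/2))) * Complex.exp (-(b * (x:ℂ)^2))) := by ring
      _ = 2 * ((x:ℂ) ^ (2*s-2) * Complex.exp (-(b * (x:ℂ)^2))) := by rw [hxx]
  have hright : ∫ y in Ioi (0:ℝ), g y = b ^ (-(s - 1/2)) * Complex.Gamma (s - 1/2) := by
    rw [← hmain]
    apply MeasureTheory.setIntegral_congr_fun measurableSet_Ioi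
    intro y _
    simp only [hg]
    congr 2
    ring
  rw [hleft, hright] at h2
  have : b ^ (-(s - 1/2)) = b ^ ((1:ℂ)/2 - s) := by ring_nf
  rw [this] at h2
  rw [eq_div_iff (by norm_num : (2:ℂ) ≠ 0)]
  linear_combination h2

lemma mul_cpow_arg {x y : ℂ} (hx : x ≠ 0) (hy : y ≠ 0)
    (h1 : -Real.pi < x.arg + y.arg) (h2 : x.arg + y.arg ≤ Real.pi) (r : ℂ) :
    (x*y)^r = x^r * y^r := by
  rw [Complex.cpow_def_of_ne_zero (mul_ne_zero hx hy), Complex.cpow_def_of_ne_zero hx,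
    Complex.cpow_def_of_ne_zero hy, (Complex.log_mul_eq_add_log_iff hx hy).2 ⟨h1, h2⟩,
    add_mul, Complex.exp_add]

lemma neg_one_cpow_half : (-1 : ℂ) ^ (1/2 : ℂ) = Complex.I := by
  rw [Complex.cpow_def_of_ne_zero (by norm_num), Complex.log_neg_one]
  rw [show ((Real.pi:ℂ) * I * (1/2)) = ((Real.pi/2 : ℝ):ℂ) * I by push_cast; ring,
    Complex.exp_mul_I]
  simp [← Complex.ofReal_cos, ← Complex.ofReal_sin, Real.cos_pi_div_two, Real.sin_pi_div_two]

lemma pi_cpow_half : ((Real.pi : ℝ) : ℂ) ^ (1/2 : ℂ) = ((Real.sqrt Real.pi : ℝ) : ℂ) := by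
  rw [show (1/2 : ℂ) = ((1/2 : ℝ) : ℂ) by norm_num,
    ← Complex.ofReal_cpow Real.pi_pos.le, Real.rpow_def_of_pos Real.pi_pos,
    Real.sqrt_eq_rpow, Real.rpow_def_of_pos Real.pi_pos]

lemma final_algebra (τ₂ z₃ τ₃ s Γv : ℂ) (hq : 0 < τ₃.im) (hX : (z₃^2/τ₃ - τ₂).im < 0) :
    ((Real.pi : ℂ) / -(2*(Real.pi:ℂ)*I*τ₃)) ^ (1/2 : ℂ) *
      ((2*(Real.pi:ℂ)*I*(z₃^2/τ₃ - τ₂)) ^ (1/2 - s) * Γv / 2) =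
    ((Real.sqrt Real.pi : ℝ) : ℂ) * I / 2 * (2*(Real.pi:ℂ)*I) ^ (-s) *
      (z₃^2 - τ₂*τ₃) ^ (1/2 - s) * τ₃ ^ (s-1) * Γv := by
  have hπ : (0:ℝ) < Real.pi := Real.pi_pos
  have hτ₃0 : τ₃ ≠ 0 := by intro hc; rw [hc] at hq; simp at hq
  set X : ℂ := z₃^2/τ₃ - τ₂ with hXdef
  have hX0 : X ≠ 0 := by intro hc; rw [hc] at hX; simp at hX
  have hXarg : X.arg < 0 := Complex.arg_neg_iff.2 hX
  have hXarg' : -Real.pi < X.arg := Complex.neg_pi_lt_arg X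
  have hτarg1 : 0 < τ₃.arg := by
    rcases lt_or_eq_of_le ((Complex.arg_nonneg_iff).2 hq.le) with h | h
    · exact h
    · exfalso
      have := (Complex.arg_eq_zero_iff).1 h.symm
      exact hq.ne' this.2
  have hτarg2 : τ₃.arg < Real.pi := by
    rcases lt_or_eq_of_le (Complex.arg_le_pi τ₃) with h | h
    · exact h
    · exfalso
      have := (Complex.arg_eq_pi_iff).1 h
      exact hq.ne' this.2
  have hIhalf : (I/2 : ℂ).arg = Real.pi / 2 := by
    rw [show (I/2 : ℂ) = I * ((1/2 : ℝ):ℂ) by push_cast; ring,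
      Complex.arg_mul_real (by norm_num), Complex.arg_I]
  have h2πI : (2*(Real.pi:ℂ)*I).arg = Real.pi / 2 := by
    rw [show (2*(Real.pi:ℂ)*I) = I * ((2*Real.pi : ℝ):ℂ) by push_cast; ring,
      Complex.arg_mul_real (by positivity), Complex.arg_I]
  have h2πI0 : (2*(Real.pi:ℂ)*I) ≠ 0 := by
    simp [Complex.I_ne_zero, Real.pi_ne_zero]
  have hIhalf0 : (I/2 : ℂ) ≠ 0 := div_ne_zero Complex.I_ne_zero two_ne_zero
  have hτinv_im : (τ₃⁻¹).im < 0 := by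
    rw [Complex.inv_im]
    have : 0 < Complex.normSq τ₃ := Complex.normSq_pos.2 hτ₃0
    exact div_neg_of_neg_of_pos (by linarith) this
  have hτinvarg : (τ₃⁻¹).arg < 0 := Complex.arg_neg_iff.2 hτinv_im
  have hτinvarg' : -Real.pi < (τ₃⁻¹).arg := Complex.neg_pi_lt_arg _
  -- base rewrites
  have hbase : (Real.pi : ℂ) / -(2*(Real.pi:ℂ)*I*τ₃) = (I/2) * τ₃⁻¹ := by
    rw [div_eq_iff (neg_ne_zero.2 (mul_ne_zero h2πI0 hτ₃0))]
    linear_combination (Real.pi:ℂ) * Complex.I_mul_I + (Real.pi:ℂ) * I * I * inv_mul_cancel₀ hτ₃0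
  have hb₀ : (2*(Real.pi:ℂ)*I*X) = (2*(Real.pi:ℂ)*I) * X := by ring
  have hD : z₃^2 - τ₂*τ₃ = X * τ₃ := by rw [hXdef, sub_mul, div_mul_cancel₀ _ hτ₃0]
  -- cpow splittings
  have E1 : ((2*(Real.pi:ℂ)*I) * X) ^ (1/2 - s) =
      (2*(Real.pi:ℂ)*I) ^ (1/2 - s) * X ^ (1/2 - s) := by
    apply mul_cpow_arg h2πI0 hX0 <;> rw [h2πI] <;> linarith
  have E2 : (2*(Real.pi:ℂ)*I) ^ ((1:ℂ)/2 - s) =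
      (2*(Real.pi:ℂ)*I) ^ (1/2 : ℂ) * (2*(Real.pi:ℂ)*I) ^ (-s) := by
    rw [show ((1:ℂ)/2 - s) = (1/2 : ℂ) + (-s) by ring, Complex.cpow_add _ _ h2πI0]
  have E3 : (X * τ₃) ^ ((1:ℂ)/2 - s) = X ^ ((1:ℂ)/2 - s) * τ₃ ^ ((1:ℂ)/2 - s) := by
    apply mul_cpow_arg hX0 hτ₃0 <;> linarith
  have E4 : ((I/2) * τ₃⁻¹) ^ (1/2 : ℂ) = (I/2) ^ (1/2 : ℂ) * (τ₃⁻¹) ^ (1/2 : ℂ) := by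
    apply mul_cpow_arg hIhalf0 (inv_ne_zero hτ₃0) <;> rw [hIhalf] <;> linarith
  have E5 : (τ₃⁻¹) ^ (1/2 : ℂ) = (τ₃ ^ (1/2 : ℂ))⁻¹ :=
    Complex.inv_cpow _ _ (by linarith)
  have E6 : (I/2) ^ (1/2 : ℂ) * (2*(Real.pi:ℂ)*I) ^ (1/2 : ℂ) =
      ((Real.sqrt Real.pi : ℝ) : ℂ) * I := by
    rw [← mul_cpow_arg hIhalf0 h2πI0 (by rw [hIhalf, h2πI]; linarith)
        (by rw [hIhalf, h2πI]; linarith) (1/2 : ℂ)]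
    rw [show (I/2) * (2*(Real.pi:ℂ)*I) = ((Real.pi:ℝ):ℂ) * (-1) by
      linear_combination (Real.pi:ℂ) * Complex.I_mul_I]
    rw [mul_cpow_arg (by exact_mod_cast hπ.ne') (by norm_num)
        (by rw [Complex.arg_ofReal_of_nonneg hπ.le, Complex.arg_neg_one]; linarith)
        (by rw [Complex.arg_ofReal_of_nonneg hπ.le, Complex.arg_neg_one]; linarith),
      pi_cpow_half, neg_one_cpow_half]
  have E7 : τ₃ ^ (1/2 : ℂ) * τ₃ ^ ((1:ℂ)/2 - s) = τ₃ ^ ((1:ℂ) - s) := by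
    rw [← Complex.cpow_add _ _ hτ₃0]; ring_nf
  have E8 : τ₃ ^ (s - 1) = (τ₃ ^ ((1:ℂ) - s))⁻¹ := by
    rw [show (s - 1 : ℂ) = -((1:ℂ) - s) by ring, Complex.cpow_neg]
  -- nonvanishing
  have n1 : τ₃ ^ (1/2 : ℂ) ≠ 0 := by
    simp [Complex.cpow_eq_zero_iff, hτ₃0]
  have n2 : τ₃ ^ ((1:ℂ)/2 - s) ≠ 0 := by
    simp [Complex.cpow_eq_zero_iff, hτ₃0]
  -- assemble
  rw [hbase, E4, E5, hb₀, E1, E2, hD, E3, E8, ← E7]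
  have hτν := mul_inv_cancel₀ n2
  rw [mul_inv, ← E6]
  linear_combination (-((I/2) ^ (1/2:ℂ) * (τ₃ ^ (1/2:ℂ))⁻¹ * (2*(Real.pi:ℂ)*I) ^ (1/2:ℂ) *
    (2*(Real.pi:ℂ)*I) ^ (-s) * X ^ ((1:ℂ)/2 - s) * Γv)/2) * hτν

/-- For `((τ₂,z₃),(z₃,τ₃)) ∈ H₂` and `Re(w+u) > 1/2`:
`∫₀^∞ t₂^{2(w+u)−2} e^{2πiτ₂t₂²} (∫_ℝ e^{2πi(τ₃t₆² + 2z₃t₂t₆)} dt₆) dt₂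
  = (√π·i/2)·(2πi)^{−(w+u)}·(z₃²−τ₂τ₃)^{1/2−w−u}·τ₃^{w+u−1}·Γ(w+u−1/2)`. -/
theorem stmt_8 (τ₂ z₃ τ₃ w u : ℂ)
    (hpd : ((!![τ₂, z₃; z₃, τ₃]).map Complex.im).PosDef)
    (h : 1 / 2 < (w + u).re) :
    ∫ t₂ in Ioi (0 : ℝ),
        (t₂ : ℂ) ^ (2 * (w + u) - 2) *
          Complex.exp (2 * (Real.pi : ℂ) * Complex.I * τ₂ * (t₂ : ℂ) ^ 2) *
          ∫ t₆ : ℝ, Complex.exp (2 * (Real.pi : ℂ) * Complex.I *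
            (τ₃ * (t₆ : ℂ) ^ 2 + 2 * z₃ * (t₂ : ℂ) * (t₆ : ℂ))) =
      (Real.sqrt Real.pi : ℂ) * Complex.I / 2 *
        (2 * (Real.pi : ℂ) * Complex.I) ^ (-(w + u)) *
        (z₃ ^ 2 - τ₂ * τ₃) ^ (1 / 2 - w - u) * τ₃ ^ (w + u - 1) *
        Complex.Gamma (w + u - 1 / 2) := by
  have hπ : (0:ℝ) < Real.pi := Real.pi_pos
  -- extract positivity
  have hmap : (!![τ₂, z₃; z₃, τ₃]).map Complex.im = !![τ₂.im, z₃.im; z₃.im, τ₃.im] := by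
    ext i j; fin_cases i <;> fin_cases j <;> simp [Matrix.map_apply]
  rw [hmap] at hpd
  have h1 := hpd.dotProduct_mulVec_pos (x := ![0,1]) (by intro hc; have := congrFun hc 1; simp at this)
  have h2 := hpd.dotProduct_mulVec_pos (x := ![1,0]) (by intro hc; have := congrFun hc 0; simp at this)
  have hdet := hpd.det_pos
  rw [Matrix.det_fin_two_of] at hdet
  simp [Matrix.mulVec, dotProduct, Fin.sum_univ_two] at h1 h2
  have hq : 0 < τ₃.im := by simpa using h1
  have hy₂ : 0 < τ₂.im := by simpa using h2
  have hdet' : z₃.im^2 < τ₂.im * τ₃.im := by nlinarith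
  have hτ₃0 : τ₃ ≠ 0 := by intro hc; rw [hc] at hq; simp at hq
  have hN : 0 < Complex.normSq τ₃ := Complex.normSq_pos.2 hτ₃0
  -- imaginary part of z₃²/τ₃ - τ₂ is negative
  have hXneg : (z₃^2/τ₃ - τ₂).im < 0 := by
    rw [Complex.sub_im, Complex.div_im]
    have hsqim : (z₃^2).im = 2*z₃.re*z₃.im := by
      rw [sq, Complex.mul_im]; ring
    have hsqre : (z₃^2).re = z₃.re^2 - z₃.im^2 := by
      rw [sq, Complex.mul_re]; ring
    have hlt : (2*z₃.re*z₃.im) * τ₃.re - (z₃.re^2 - z₃.im^2) * τ₃.im <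
        τ₂.im * (τ₃.re*τ₃.re + τ₃.im*τ₃.im) := by
      nlinarith [sq_nonneg (τ₂.im*τ₃.re - z₃.re*z₃.im),
        mul_pos (add_pos_of_nonneg_of_pos (sq_nonneg z₃.re) (mul_pos hy₂ hq)) (sub_pos.2 hdet')]
    rw [sub_neg, hsqim, hsqre, Complex.normSq_apply]
    rw [div_sub_div_same, div_lt_iff₀ (by nlinarith : (0:ℝ) < τ₃.re*τ₃.re + τ₃.im*τ₃.im)]
    nlinarith [hlt]
  -- coefficients
  have hbneg : (2*(Real.pi:ℂ)*I*τ₃).re < 0 := by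
    rw [show (2*(Real.pi:ℂ)*I*τ₃) = τ₃ * (((2*Real.pi : ℝ)):ℂ) * I from by push_cast; ring]
    rw [Complex.mul_re, Complex.I_re, Complex.I_im]
    simp only [Complex.mul_im, Complex.ofReal_re, Complex.ofReal_im]
    nlinarith
  have hb₀re : 0 < (2*(Real.pi:ℂ)*I*(z₃^2/τ₃ - τ₂)).re := by
    rw [show (2*(Real.pi:ℂ)*I*(z₃^2/τ₃ - τ₂)) = (z₃^2/τ₃ - τ₂) * (((2*Real.pi : ℝ)):ℂ) * I
      from by push_cast; ring]
    rw [Complex.mul_re, Complex.I_re, Complex.I_im]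
    simp only [Complex.mul_im, Complex.ofReal_re, Complex.ofReal_im]
    nlinarith
  set s : ℂ := w + u with hsdef
  set K : ℂ := ((Real.pi : ℂ) / -(2*(Real.pi:ℂ)*I*τ₃)) ^ (1/2 : ℂ) with hKdef
  set b₀ : ℂ := 2*(Real.pi:ℂ)*I*(z₃^2/τ₃ - τ₂) with hb₀def
  have hpoint : ∀ t : ℝ,
      (t : ℂ) ^ (2 * s - 2) *
        Complex.exp (2 * (Real.pi : ℂ) * I * τ₂ * (t : ℂ) ^ 2) *
        (∫ t₆ : ℝ, Complex.exp (2 * (Real.pi : ℂ) * I *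
          (τ₃ * (t₆ : ℂ) ^ 2 + 2 * z₃ * (t : ℂ) * (t₆ : ℂ)))) =
      K * ((t : ℂ) ^ (2 * s - 2) * Complex.exp (-(b₀ * (t:ℂ)^2))) := by
    intro t
    have hinner : (∫ t₆ : ℝ, Complex.exp (2 * (Real.pi : ℂ) * I *
        (τ₃ * (t₆ : ℂ) ^ 2 + 2 * z₃ * (t : ℂ) * (t₆ : ℂ)))) =
        K * Complex.exp (0 - (4*(Real.pi:ℂ)*I*z₃*t)^2 / (4 * (2*(Real.pi:ℂ)*I*τ₃))) := by
      rw [show (fun t₆ : ℝ => Complex.exp (2 * (Real.pi : ℂ) * I *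
          (τ₃ * (t₆ : ℂ) ^ 2 + 2 * z₃ * (t : ℂ) * (t₆ : ℂ)))) =
        (fun t₆ : ℝ => Complex.exp ((2*(Real.pi:ℂ)*I*τ₃) * (t₆:ℂ)^2 +
          (4*(Real.pi:ℂ)*I*z₃*t) * (t₆:ℂ) + 0)) from funext fun t₆ => by ring_nf]
      rw [integral_cexp_quadratic hbneg]
    rw [hinner]
    rw [show (t : ℂ) ^ (2 * s - 2) *
        Complex.exp (2 * (Real.pi : ℂ) * I * τ₂ * (t : ℂ) ^ 2) *
        (K * Complex.exp (0 - (4*(Real.pi:ℂ)*I*z₃*t)^2 / (4 * (2*(Real.pi:ℂ)*I*τ₃)))) =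
      K * ((t : ℂ) ^ (2 * s - 2) *
        (Complex.exp (2 * (Real.pi : ℂ) * I * τ₂ * (t : ℂ) ^ 2) *
         Complex.exp (0 - (4*(Real.pi:ℂ)*I*z₃*t)^2 / (4 * (2*(Real.pi:ℂ)*I*τ₃))))) from by ring]
    rw [← Complex.exp_add]
    have hexp : 2 * (Real.pi : ℂ) * I * τ₂ * (t : ℂ) ^ 2 +
        (0 - (4*(Real.pi:ℂ)*I*z₃*t)^2 / (4 * (2*(Real.pi:ℂ)*I*τ₃))) = -(b₀ * (t:ℂ)^2) := by
      rw [hb₀def]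
      have hI := Complex.I_mul_I
      have hπ0 : ((Real.pi:ℝ):ℂ) ≠ 0 := Complex.ofReal_ne_zero.2 hπ.ne'
      have hden : (4 : ℂ) * (2*(Real.pi:ℂ)*I*τ₃) ≠ 0 := by
        apply mul_ne_zero (by norm_num)
        exact mul_ne_zero (mul_ne_zero (mul_ne_zero two_ne_zero hπ0) Complex.I_ne_zero) hτ₃0
      have hC : (4*(Real.pi:ℂ)*I*z₃*t)^2/(4*(2*(Real.pi:ℂ)*I*τ₃)) =
          2*(Real.pi:ℂ)*I*z₃^2*(t:ℂ)^2/τ₃ := by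
        rw [div_eq_div_iff hden hτ₃0]; ring
      rw [hC]
      field_simp
      ring
    rw [hexp]
  calc ∫ t₂ in Ioi (0 : ℝ),
        (t₂ : ℂ) ^ (2 * s - 2) *
          Complex.exp (2 * (Real.pi : ℂ) * Complex.I * τ₂ * (t₂ : ℂ) ^ 2) *
          ∫ t₆ : ℝ, Complex.exp (2 * (Real.pi : ℂ) * Complex.I *
            (τ₃ * (t₆ : ℂ) ^ 2 + 2 * z₃ * (t₂ : ℂ) * (t₆ : ℂ)))
      = ∫ t in Ioi (0:ℝ), K * ((t : ℂ) ^ (2 * s - 2) * Complex.exp (-(b₀ * (t:ℂ)^2))) := by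
        exact MeasureTheory.setIntegral_congr_fun measurableSet_Ioi fun t _ => hpoint t
    _ = K * ∫ t in Ioi (0:ℝ), (t : ℂ) ^ (2 * s - 2) * Complex.exp (-(b₀ * (t:ℂ)^2)) :=
        integral_const_mul K _
    _ = K * (b₀ ^ (1/2 - s) * Complex.Gamma (s - 1/2) / 2) := by
        rw [cpow_exp_sq_integral h hb₀re]
    _ = (Real.sqrt Real.pi : ℂ) * Complex.I / 2 *
        (2 * (Real.pi : ℂ) * Complex.I) ^ (-s) *
        (z₃ ^ 2 - τ₂ * τ₃) ^ (1 / 2 - w - u) * τ₃ ^ (s - 1) *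
        Complex.Gamma (s - 1 / 2) := by
        rw [show (1:ℂ)/2 - w - u = 1/2 - s from by rw [hsdef]; ring]
        exact final_algebra τ₂ z₃ τ₃ s (Complex.Gamma (s - 1/2)) hq hXneg
end

section
/- Let Z ∈ H₃. Then Z is invertible, the matrix −Z⁻¹ again lies in H₃, and for all s₁, s₂, s₃ ∈ ℂ one has P(s₁, s₂, s₃; −Z⁻¹) = e^{(s₁+2s₂+3s₃)πi} · P(s₂, s₁, −s₁−s₂−s₃; WZW), where W = ((0,0,1),(0,1,0),(1,0,0)) is the 3×3 antidiagonal permutation matrix (so WZW reverses the order of rows and columns of Z). -/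
open Complex

lemma log_unique {A B : ℂ} (h : Complex.exp A = Complex.exp B)
    (h2 : |A.im - B.im| < 2 * Real.pi) : A = B := by
  obtain ⟨n, hn⟩ := Complex.exp_eq_exp_iff_exists_int.mp h
  have him : A.im = B.im + n * (2 * Real.pi) := by
    rw [hn]; simp [Complex.add_im, Complex.mul_im]
  have hb : |(n : ℝ)| * (2 * Real.pi) < 2 * Real.pi := by
    have : |(n:ℝ) * (2*Real.pi)| < 2 * Real.pi := by
      rw [show (n:ℝ) * (2*Real.pi) = A.im - B.im by rw [him]; ring]; exact h2
    rwa [abs_mul, abs_of_pos Real.two_pi_pos] at this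
  have hn0 : n = 0 := by
    by_contra hne
    have : (1:ℝ) ≤ |(n:ℝ)| := by
      rw [← Int.cast_abs]; exact_mod_cast Int.one_le_abs (by exact_mod_cast hne)
    nlinarith [Real.two_pi_pos]
  rw [hn, hn0]; simp

lemma arg_bounds {z : ℂ} (hz : 0 < z.im) : 0 < z.arg ∧ z.arg < Real.pi := by
  constructor
  · rcases lt_or_eq_of_le (Complex.arg_nonneg_iff.mpr hz.le) with h | h
    · exact h
    · exfalso; have := (Complex.arg_eq_zero_iff.mp h.symm).2; linarith
  · exact Complex.arg_lt_pi_iff.mpr (Or.inr (ne_of_gt hz))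

lemma im_ne_zero {z : ℂ} (hz : 0 < z.im) : z ≠ 0 := by
  intro h; rw [h] at hz; simp at hz

set_option maxHeartbeats 2000000 in
lemma scalar_main (t1 t2 t3 d2 e2 d : ℂ)
    (h1 : 0 < t1.im) (h2 : 0 < t2.im) (h3 : 0 < t3.im)
    (h21 : 0 < (d2/t1).im) (h22 : 0 < (d2/t2).im)
    (h23 : 0 < (e2/t2).im) (h24 : 0 < (e2/t3).im)
    (h31 : 0 < (d/d2).im) (h32 : 0 < (d/e2).im) (s₁ s₂ s₃ : ℂ) :
    (-(e2/d)) ^ s₁ * (Complex.exp (s₂ * (Real.pi:ℂ) * Complex.I) * (-(t3/d)) ^ s₂) *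
      (Complex.exp (2*s₃ * (Real.pi:ℂ) * Complex.I) * t1⁻¹ ^ s₃ * (-(t1/d)) ^ s₃)
    = Complex.exp ((s₁+2*s₂+3*s₃) * (Real.pi:ℂ) * Complex.I) *
      (t3 ^ s₂ * (Complex.exp (s₁ * (Real.pi:ℂ) * Complex.I) * (-e2) ^ s₁) *
       (Complex.exp (2*(-s₁-s₂-s₃) * (Real.pi:ℂ) * Complex.I) *
         (-(d/d2)) ^ (-s₁-s₂-s₃) * (-d2) ^ (-s₁-s₂-s₃))) := by
  have ht1 : t1 ≠ 0 := im_ne_zero h1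
  have ht2 : t2 ≠ 0 := im_ne_zero h2
  have ht3 : t3 ≠ 0 := im_ne_zero h3
  have hd2 : d2 ≠ 0 := by
    intro h; rw [h] at h21; simp at h21
  have he2 : e2 ≠ 0 := by
    intro h; rw [h] at h23; simp at h23
  have hd : d ≠ 0 := by
    intro h; rw [h] at h31; simp at h31
  obtain ⟨a1, a1'⟩ := arg_bounds h1
  obtain ⟨a2, a2'⟩ := arg_bounds h2
  obtain ⟨a3, a3'⟩ := arg_bounds h3
  obtain ⟨b1, b1'⟩ := arg_bounds h21
  obtain ⟨b2, b2'⟩ := arg_bounds h22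
  obtain ⟨b3, b3'⟩ := arg_bounds h23
  obtain ⟨b4, b4'⟩ := arg_bounds h24
  obtain ⟨c1, c1'⟩ := arg_bounds h31
  obtain ⟨c2, c2'⟩ := arg_bounds h32
  have pi_pos := Real.pi_pos
  -- principal log bounds
  have P : ∀ z : ℂ, -Real.pi < (Complex.log z).im ∧ (Complex.log z).im ≤ Real.pi := by
    intro z; rw [Complex.log_im]; exact ⟨Complex.neg_pi_lt_arg z, Complex.arg_le_pi z⟩
  -- chain expansions
  have n1 : Complex.log (-(d/d2)) = Complex.log (d/d2) - (Real.pi:ℂ) * I := by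
    apply log_unique
    · rw [Complex.exp_log (neg_ne_zero.mpr (div_ne_zero hd hd2)), Complex.exp_sub,
        Complex.exp_log (div_ne_zero hd hd2), Complex.exp_pi_mul_I]
      rw [div_neg, div_one]
    · obtain ⟨u1, u2⟩ := P (-(d/d2))
      have : ((Complex.log (d/d2) - (Real.pi:ℂ) * I)).im = (d/d2).arg - Real.pi := by
        simp [Complex.sub_im, Complex.log_im, Complex.mul_im]
      rw [this]
      rw [abs_lt]; constructor <;> linarith
  have c1eq : Complex.log (-d2) = Complex.log t1 + Complex.log (d2/t1) - (Real.pi:ℂ) * I := by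
    apply log_unique
    · rw [Complex.exp_log (neg_ne_zero.mpr hd2), Complex.exp_sub, Complex.exp_add,
        Complex.exp_log ht1, Complex.exp_log (div_ne_zero hd2 ht1), Complex.exp_pi_mul_I]
      field_simp
    · obtain ⟨u1, u2⟩ := P (-d2)
      have : ((Complex.log t1 + Complex.log (d2/t1) - (Real.pi:ℂ) * I)).im
          = t1.arg + (d2/t1).arg - Real.pi := by
        simp [Complex.sub_im, Complex.add_im, Complex.log_im, Complex.mul_im]
      rw [this, abs_lt]; constructor <;> linarith
  have c4eq : Complex.log (-e2) = Complex.log t3 + Complex.log (e2/t3) - (Real.pi:ℂ) * I := by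
    apply log_unique
    · rw [Complex.exp_log (neg_ne_zero.mpr he2), Complex.exp_sub, Complex.exp_add,
        Complex.exp_log ht3, Complex.exp_log (div_ne_zero he2 ht3), Complex.exp_pi_mul_I]
      field_simp
    · obtain ⟨u1, u2⟩ := P (-e2)
      have : ((Complex.log t3 + Complex.log (e2/t3) - (Real.pi:ℂ) * I)).im
          = t3.arg + (e2/t3).arg - Real.pi := by
        simp [Complex.sub_im, Complex.add_im, Complex.log_im, Complex.mul_im]
      rw [this, abs_lt]; constructor <;> linarith
  have sA : Complex.log t1 + Complex.log (d2/t1) = Complex.log t2 + Complex.log (d2/t2) := by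
    apply log_unique
    · rw [Complex.exp_add, Complex.exp_add, Complex.exp_log ht1, Complex.exp_log ht2,
        Complex.exp_log (div_ne_zero hd2 ht1), Complex.exp_log (div_ne_zero hd2 ht2)]
      field_simp
    · have e1 : (Complex.log t1 + Complex.log (d2/t1)).im = t1.arg + (d2/t1).arg := by
        simp [Complex.add_im, Complex.log_im]
      have e2' : (Complex.log t2 + Complex.log (d2/t2)).im = t2.arg + (d2/t2).arg := by
        simp [Complex.add_im, Complex.log_im]
      rw [e1, e2', abs_lt]; constructor <;> linarith
  have sB : Complex.log t3 + Complex.log (e2/t3) = Complex.log t2 + Complex.log (e2/t2) := by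
    apply log_unique
    · rw [Complex.exp_add, Complex.exp_add, Complex.exp_log ht3, Complex.exp_log ht2,
        Complex.exp_log (div_ne_zero he2 ht3), Complex.exp_log (div_ne_zero he2 ht2)]
      field_simp
    · have e1 : (Complex.log t3 + Complex.log (e2/t3)).im = t3.arg + (e2/t3).arg := by
        simp [Complex.add_im, Complex.log_im]
      have e2' : (Complex.log t2 + Complex.log (e2/t2)).im = t2.arg + (e2/t2).arg := by
        simp [Complex.add_im, Complex.log_im]
      rw [e1, e2', abs_lt]; constructor <;> linarith
  have sC : Complex.log (d2/t2) + Complex.log (d/d2)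
      = Complex.log (e2/t2) + Complex.log (d/e2) := by
    apply log_unique
    · rw [Complex.exp_add, Complex.exp_add, Complex.exp_log (div_ne_zero hd2 ht2),
        Complex.exp_log (div_ne_zero hd hd2), Complex.exp_log (div_ne_zero he2 ht2),
        Complex.exp_log (div_ne_zero hd he2)]
      field_simp
    · have e1 : (Complex.log (d2/t2) + Complex.log (d/d2)).im = (d2/t2).arg + (d/d2).arg := by
        simp [Complex.add_im, Complex.log_im]
      have e2' : (Complex.log (e2/t2) + Complex.log (d/e2)).im = (e2/t2).arg + (d/e2).arg := by
        simp [Complex.add_im, Complex.log_im]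
      rw [e1, e2', abs_lt]; constructor <;> linarith
  -- L in both chains
  have hL : Complex.log (-(d/d2)) + Complex.log (-d2)
      = Complex.log t3 + Complex.log (e2/t3) + Complex.log (d/e2) - 2*(Real.pi:ℂ)*I := by
    rw [n1, c1eq]
    linear_combination sA + sC - sB
  -- key logs
  have key1 : Complex.log (-(e2/d)) = (Real.pi:ℂ)*I - Complex.log (d/e2) := by
    apply log_unique
    · rw [Complex.exp_log (neg_ne_zero.mpr (div_ne_zero he2 hd)), Complex.exp_sub,
        Complex.exp_log (div_ne_zero hd he2), Complex.exp_pi_mul_I]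
      field_simp
      try ring
    · obtain ⟨u1, u2⟩ := P (-(e2/d))
      have : (((Real.pi:ℂ)*I - Complex.log (d/e2))).im = Real.pi - (d/e2).arg := by
        simp [Complex.sub_im, Complex.log_im, Complex.mul_im]
      rw [this, abs_lt]; constructor <;> linarith
  have key2 : Complex.log (-(t3/d))
      = (Real.pi:ℂ)*I - Complex.log (e2/t3) - Complex.log (d/e2) := by
    apply log_unique
    · rw [Complex.exp_log (neg_ne_zero.mpr (div_ne_zero ht3 hd)), Complex.exp_sub,
        Complex.exp_sub, Complex.exp_log (div_ne_zero he2 ht3),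
        Complex.exp_log (div_ne_zero hd he2), Complex.exp_pi_mul_I]
      field_simp
      try ring
    · obtain ⟨u1, u2⟩ := P (-(t3/d))
      have : (((Real.pi:ℂ)*I - Complex.log (e2/t3) - Complex.log (d/e2))).im
          = Real.pi - (e2/t3).arg - (d/e2).arg := by
        simp [Complex.sub_im, Complex.log_im, Complex.mul_im]
      rw [this, abs_lt]; constructor <;> linarith
  have key3 : Complex.log (-(t1/d))
      = (Real.pi:ℂ)*I - Complex.log (d2/t1) - Complex.log (d/d2) := by
    apply log_unique
    · rw [Complex.exp_log (neg_ne_zero.mpr (div_ne_zero ht1 hd)), Complex.exp_sub,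
        Complex.exp_sub, Complex.exp_log (div_ne_zero hd2 ht1),
        Complex.exp_log (div_ne_zero hd hd2), Complex.exp_pi_mul_I]
      rw [div_div, div_mul_div_comm, div_div_eq_mul_div, neg_mul, one_mul, neg_div,
        mul_comm t1 d2, mul_div_mul_left t1 d hd2]
    · obtain ⟨u1, u2⟩ := P (-(t1/d))
      have : (((Real.pi:ℂ)*I - Complex.log (d2/t1) - Complex.log (d/d2))).im
          = Real.pi - (d2/t1).arg - (d/d2).arg := by
        simp [Complex.sub_im, Complex.log_im, Complex.mul_im]
      rw [this, abs_lt]; constructor <;> linarith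
  -- final identities in terms of L
  have hI : Complex.log (-(e2/d))
      = Complex.log (-e2) - (Complex.log (-(d/d2)) + Complex.log (-d2)) := by
    rw [key1, c4eq, hL]; ring
  have hII : Complex.log (-(t3/d))
      = Complex.log t3 - (Complex.log (-(d/d2)) + Complex.log (-d2)) - (Real.pi:ℂ)*I := by
    rw [key2, hL]; ring
  have hIII : Complex.log (-(t1/d))
      = Complex.log t1 - (Complex.log (-(d/d2)) + Complex.log (-d2)) - (Real.pi:ℂ)*I := by
    rw [key3, n1, c1eq]; ring
  have hIV : Complex.log t1⁻¹ = - Complex.log t1 :=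
    Complex.log_inv t1 (by intro h; rw [h] at a1'; exact lt_irrefl _ a1')
  -- convert cpow to exp
  rw [Complex.cpow_def_of_ne_zero (neg_ne_zero.mpr (div_ne_zero he2 hd)),
    Complex.cpow_def_of_ne_zero (neg_ne_zero.mpr (div_ne_zero ht3 hd)),
    Complex.cpow_def_of_ne_zero (inv_ne_zero ht1),
    Complex.cpow_def_of_ne_zero (neg_ne_zero.mpr (div_ne_zero ht1 hd)),
    Complex.cpow_def_of_ne_zero ht3,
    Complex.cpow_def_of_ne_zero (neg_ne_zero.mpr he2),
    Complex.cpow_def_of_ne_zero (neg_ne_zero.mpr (div_ne_zero hd hd2)),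
    Complex.cpow_def_of_ne_zero (neg_ne_zero.mpr hd2)]
  simp only [← Complex.exp_add]
  congr 1
  linear_combination s₁ * hI + s₂ * hII + s₃ * hIII + s₃ * hIV
open Complex Matrix

lemma symm_entries (Z : Matrix (Fin 3) (Fin 3) ℂ) (hsym : Z.IsSymm) :
    Z 1 0 = Z 0 1 ∧ Z 2 0 = Z 0 2 ∧ Z 2 1 = Z 1 2 :=
  ⟨hsym.apply 0 1, hsym.apply 0 2, hsym.apply 1 2⟩

lemma quad_im_pos (Z : Matrix (Fin 3) (Fin 3) ℂ) (hsym : Z.IsSymm)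
    (hpd : (Z.map Complex.im).PosDef) (v : Fin 3 → ℂ) (hv : v ≠ 0) :
    0 < (dotProduct (star v) (Z *ᵥ v)).im := by
  obtain ⟨h10, h20, h21⟩ := symm_entries Z hsym
  have key : (dotProduct (star v) (Z *ᵥ v)).im
      = dotProduct (fun i => (v i).re) ((Z.map Complex.im) *ᵥ (fun i => (v i).re))
        + dotProduct (fun i => (v i).im) ((Z.map Complex.im) *ᵥ (fun i => (v i).im)) := by
    simp [dotProduct, Matrix.mulVec, Fin.sum_univ_three, Matrix.map_apply,
      h10, h20, h21, Complex.add_im, Complex.mul_im, Complex.mul_re]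
    ring
  have hab : (fun i => (v i).re) ≠ (0 : Fin 3 → ℝ) ∨ (fun i => (v i).im) ≠ (0 : Fin 3 → ℝ) := by
    by_contra hc
    push_neg at hc
    apply hv
    funext i
    have h1 := congrFun hc.1 i
    have h2 := congrFun hc.2 i
    simp only [Pi.zero_apply] at h1 h2
    exact Complex.ext h1 h2
  have hre : ∀ x : Fin 3 → ℝ, 0 ≤ dotProduct x ((Z.map Complex.im) *ᵥ x) := by
    intro x
    simpa using hpd.posSemidef.dotProduct_mulVec_nonneg x
  have hgt : ∀ x : Fin 3 → ℝ, x ≠ 0 → 0 < dotProduct x ((Z.map Complex.im) *ᵥ x) := by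
    intro x hx
    simpa using hpd.dotProduct_mulVec_pos hx
  rw [key]
  rcases hab with h | h
  · have := hgt _ h
    have := hre (fun i => (v i).im)
    linarith
  · have := hgt _ h
    have := hre (fun i => (v i).re)
    linarith

lemma det_ne_zero (Z : Matrix (Fin 3) (Fin 3) ℂ) (hsym : Z.IsSymm)
    (hpd : (Z.map Complex.im).PosDef) : Z.det ≠ 0 := by
  intro h
  obtain ⟨v, hv, hZv⟩ := (Matrix.exists_mulVec_eq_zero_iff).mpr h
  have := quad_im_pos Z hsym hpd v hv
  rw [hZv] at this
  simp at this

lemma neginv_posdef (Z : Matrix (Fin 3) (Fin 3) ℂ) (hsym : Z.IsSymm)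
    (hpd : (Z.map Complex.im).PosDef) : ((-Z⁻¹).map Complex.im).PosDef := by
  obtain ⟨h10, h20, h21⟩ := symm_entries Z hsym
  have hdet := det_ne_zero Z hsym hpd
  have hdu : IsUnit Z.det := hdet.isUnit
  have hsymA : (-Z⁻¹).IsSymm := by
    rw [Matrix.IsSymm, Matrix.transpose_neg, Matrix.transpose_nonsing_inv, hsym]
  refine Matrix.PosDef.of_dotProduct_mulVec_pos ?_ ?_
  · rw [Matrix.IsHermitian]
    ext i j
    simp [Matrix.conjTranspose_apply, Matrix.map_apply, hsymA.apply i j]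
  · intro x hx
    set x' : Fin 3 → ℂ := fun i => ((x i : ℝ) : ℂ) with hx'def
    have hx' : x' ≠ 0 := by
      intro h
      apply hx
      funext i
      have := congrFun h i
      simpa [hx'def] using this
    set v : Fin 3 → ℂ := Z⁻¹ *ᵥ x' with hvdef
    have hZv : Z *ᵥ v = x' := by
      rw [hvdef, Matrix.mulVec_mulVec, Matrix.mul_nonsing_inv _ hdu, Matrix.one_mulVec]
    have hv : v ≠ 0 := by
      intro h
      rw [h, Matrix.mulVec_zero] at hZv
      exact hx' hZv.symm
    have hq := quad_im_pos Z hsym hpd (star v) (star_ne_zero.mpr hv)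
    -- step 1
    have step1 : dotProduct (star x) (((-Z⁻¹).map Complex.im) *ᵥ x)
        = (dotProduct x' ((-Z⁻¹) *ᵥ x')).im := by
      simp [dotProduct, Matrix.mulVec, Fin.sum_univ_three, Matrix.map_apply,
        hx'def, Complex.add_im, Complex.mul_im]
    have step2 : dotProduct x' ((-Z⁻¹) *ᵥ x') = -(dotProduct x' v) := by
      rw [Matrix.neg_mulVec, dotProduct_neg, hvdef]
    have hxr : star x' = x' := by
      funext i
      simp [hx'def]
    have step3 : dotProduct x' v
        = star (dotProduct (star (star v)) (Z *ᵥ (star v))) := by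
      nth_rewrite 1 [← hxr, ← hZv]
      simp [dotProduct, Matrix.mulVec, Fin.sum_univ_three, Pi.star_apply,
        star_add, star_mul', Complex.star_def, h10, h20, h21]
      ring
    rw [step1, step2, step3]
    simp only [Complex.star_def, Complex.neg_im, Complex.conj_im, neg_neg]
    exact hq
open Complex Matrix

lemma im_ne_zero' {z : ℂ} (hz : 0 < z.im) : z ≠ 0 := by
  intro h; rw [h] at hz; simp at hz

lemma im_inv_pos_of_im_neg {w : ℂ} (h : w.im < 0) : 0 < (w⁻¹).im := by
  have hw : w ≠ 0 := by intro h0; rw [h0] at h; simp at h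
  rw [Complex.inv_im]
  exact div_pos (neg_pos.mpr h) (Complex.normSq_pos.mpr hw)

lemma im_schur {t w z : ℂ} (ht : 0 < t.im) (hw : 0 < w.im)
    (hmin : z.im ^ 2 < t.im * w.im) : 0 < ((t * w - z ^ 2) / t).im := by
  have hn : 0 < Complex.normSq t := Complex.normSq_pos.mpr (im_ne_zero' ht)
  rw [Complex.div_im, div_sub_div_same]
  apply div_pos _ hn
  have hcore : 0 < w.im * ((t*w - z^2).im * t.re - (t*w - z^2).re * t.im) := by
    simp only [Complex.sub_im, Complex.sub_re, Complex.mul_im, Complex.mul_re, pow_two]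
    nlinarith [sq_nonneg (w.im * t.re - z.re * z.im),
      mul_pos (sub_pos.mpr hmin) (add_pos_of_nonneg_of_pos (sq_nonneg z.re) (mul_pos ht hw))]
  nlinarith [hw]



/-- The power function on the Siegel upper half-space of degree 3:
`P(s,w,u;Z) = τ₁^s · e^{wπi}(−det Z₂)^w · e^{2uπi}((det Z)/(z₃²−τ₂τ₃))^u (z₃²−τ₂τ₃)^u`,
with all powers principal-branch powers. -/
noncomputable def siegelPower (s w u : ℂ) (Z : Matrix (Fin 3) (Fin 3) ℂ) : ℂ :=
  (Z 0 0) ^ s *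
    (Complex.exp (w * (Real.pi : ℂ) * Complex.I) *
      (-(Z 0 0 * Z 1 1 - Z 0 1 ^ 2)) ^ w) *
    (Complex.exp (2 * u * (Real.pi : ℂ) * Complex.I) *
      (Z.det / (Z 1 2 ^ 2 - Z 1 1 * Z 2 2)) ^ u * (Z 1 2 ^ 2 - Z 1 1 * Z 2 2) ^ u)

/-- The 3×3 antidiagonal permutation matrix `W`. -/
def antidiagW : Matrix (Fin 3) (Fin 3) ℂ := !![0, 0, 1; 0, 1, 0; 1, 0, 0]

set_option maxHeartbeats 2000000 in
/-- For `Z ∈ H₃`, `Z` is invertible, `−Z⁻¹ ∈ H₃`, and for all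
`s₁, s₂, s₃ ∈ ℂ`:
`P(s₁,s₂,s₃; −Z⁻¹) = e^{(s₁+2s₂+3s₃)πi} · P(s₂,s₁,−s₁−s₂−s₃; WZW)`. -/
theorem stmt_10 (Z : Matrix (Fin 3) (Fin 3) ℂ) (hsym : Z.IsSymm)
    (hpd : (Z.map Complex.im).PosDef) :
    IsUnit Z.det ∧ (-Z⁻¹).IsSymm ∧ ((-Z⁻¹).map Complex.im).PosDef ∧
    ∀ s₁ s₂ s₃ : ℂ,
      siegelPower s₁ s₂ s₃ (-Z⁻¹) =
        Complex.exp ((s₁ + 2 * s₂ + 3 * s₃) * (Real.pi : ℂ) * Complex.I) *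
          siegelPower s₂ s₁ (-s₁ - s₂ - s₃) (antidiagW * Z * antidiagW) := by
  obtain ⟨h10, h20, h21⟩ := symm_entries Z hsym
  have hdet := det_ne_zero Z hsym hpd
  have hdu : IsUnit Z.det := hdet.isUnit
  have hNpd := neginv_posdef Z hsym hpd
  have hsymA : (-Z⁻¹).IsSymm := by
    rw [Matrix.IsSymm, Matrix.transpose_neg, Matrix.transpose_nonsing_inv, hsym]
  refine ⟨hdu, hsymA, hNpd, ?_⟩
  intro s₁ s₂ s₃
  -- diagonal positivity of Im Z
  have e0ne : (![1,0,0] : Fin 3 → ℝ) ≠ 0 := by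
    intro h; have := congrFun h 0; norm_num at this
  have e1ne : (![0,1,0] : Fin 3 → ℝ) ≠ 0 := by
    intro h; have := congrFun h 1; norm_num at this
  have e2ne : (![0,0,1] : Fin 3 → ℝ) ≠ 0 := by
    intro h; have := congrFun h 2; simp [Matrix.cons_val] at this
  have y1 : 0 < (Z 0 0).im := by
    have := hpd.dotProduct_mulVec_pos e0ne
    simpa [dotProduct, Matrix.mulVec, Fin.sum_univ_three, Matrix.map_apply] using this
  have y2 : 0 < (Z 1 1).im := by
    have := hpd.dotProduct_mulVec_pos e1ne
    simpa [dotProduct, Matrix.mulVec, Fin.sum_univ_three, Matrix.map_apply] using this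
  have y3 : 0 < (Z 2 2).im := by
    have := hpd.dotProduct_mulVec_pos e2ne
    simpa [dotProduct, Matrix.mulVec, Fin.sum_univ_three, Matrix.map_apply] using this
  -- 2x2 minors of Im Z
  have m01 : (Z 0 1).im ^ 2 < (Z 0 0).im * (Z 1 1).im := by
    have hne : (![(Z 0 1).im, -(Z 0 0).im, 0] : Fin 3 → ℝ) ≠ 0 := by
      intro h; have := congrFun h 1
      simp at this; linarith
    have := hpd.dotProduct_mulVec_pos hne
    simp [dotProduct, Matrix.mulVec, Fin.sum_univ_three, Matrix.map_apply,
      h10, h20, h21] at this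
    nlinarith [this, y1]
  have m12 : (Z 1 2).im ^ 2 < (Z 1 1).im * (Z 2 2).im := by
    have hne : (![0, (Z 1 2).im, -(Z 1 1).im] : Fin 3 → ℝ) ≠ 0 := by
      intro h; have := congrFun h 2
      simp at this; linarith
    have := hpd.dotProduct_mulVec_pos hne
    simp [dotProduct, Matrix.mulVec, Fin.sum_univ_three, Matrix.map_apply,
      h10, h20, h21] at this
    nlinarith [this, y2]
  have ht1 : Z 0 0 ≠ 0 := im_ne_zero' y1
  -- inverse entries
  have hZi : Z⁻¹ = (Z.det)⁻¹ • Z.adjugate := by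
    rw [Matrix.inv_def, Ring.inverse_eq_inv']
  have hadj := Matrix.adjugate_fin_three Z
  have hA1 : (-Z⁻¹) 0 0 = -((Z 1 1 * Z 2 2 - Z 1 2 ^ 2) / Z.det) := by
    rw [Matrix.neg_apply, hZi, Matrix.smul_apply, hadj]
    simp [h21]
    ring
  have hA5 : (-Z⁻¹) 2 2 = -((Z 0 0 * Z 1 1 - Z 0 1 ^ 2) / Z.det) := by
    rw [Matrix.neg_apply, hZi, Matrix.smul_apply, hadj]
    simp [h10]
    ring
  have hA2 : -((-Z⁻¹) 0 0 * (-Z⁻¹) 1 1 - ((-Z⁻¹) 0 1) ^ 2) = -(Z 2 2 / Z.det) := by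
    have h00 : (Z⁻¹) 0 0 = (Z.det)⁻¹ * (Z 1 1 * Z 2 2 - Z 1 2 * Z 2 1) := by
      rw [hZi, Matrix.smul_apply, hadj]; simp
    have h11 : (Z⁻¹) 1 1 = (Z.det)⁻¹ * (Z 0 0 * Z 2 2 - Z 0 2 * Z 2 0) := by
      rw [hZi, Matrix.smul_apply, hadj]; simp
    have h01 : (Z⁻¹) 0 1 = (Z.det)⁻¹ * (-(Z 0 1 * Z 2 2) + Z 0 2 * Z 2 1) := by
      rw [hZi, Matrix.smul_apply, hadj]; simp
    have jac : (Z 1 1 * Z 2 2 - Z 1 2 * Z 1 2) * (Z 0 0 * Z 2 2 - Z 0 2 * Z 0 2)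
        - (-(Z 0 1 * Z 2 2) + Z 0 2 * Z 1 2) ^ 2 = Z 2 2 * Z.det := by
      rw [Matrix.det_fin_three]
      simp only [h10, h20, h21]
      ring
    calc -((-Z⁻¹) 0 0 * (-Z⁻¹) 1 1 - ((-Z⁻¹) 0 1) ^ 2)
        = -(((Z 1 1 * Z 2 2 - Z 1 2 * Z 1 2) * (Z 0 0 * Z 2 2 - Z 0 2 * Z 0 2)
            - (-(Z 0 1 * Z 2 2) + Z 0 2 * Z 1 2) ^ 2) * (Z.det⁻¹ * Z.det⁻¹)) := by
          rw [Matrix.neg_apply, Matrix.neg_apply, Matrix.neg_apply, h00, h11, h01]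
          simp only [h10, h20, h21]
          ring
      _ = -((Z 2 2 * Z.det) * (Z.det⁻¹ * Z.det⁻¹)) := by rw [jac]
      _ = -(Z 2 2 / Z.det) := by field_simp
  have hA4 : ((-Z⁻¹) 1 2) ^ 2 - (-Z⁻¹) 1 1 * (-Z⁻¹) 2 2 = -(Z 0 0 / Z.det) := by
    have h11 : (Z⁻¹) 1 1 = (Z.det)⁻¹ * (Z 0 0 * Z 2 2 - Z 0 2 * Z 2 0) := by
      rw [hZi, Matrix.smul_apply, hadj]; simp
    have h22 : (Z⁻¹) 2 2 = (Z.det)⁻¹ * (Z 0 0 * Z 1 1 - Z 0 1 * Z 1 0) := by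
      rw [hZi, Matrix.smul_apply, hadj]; simp
    have h12 : (Z⁻¹) 1 2 = (Z.det)⁻¹ * (-(Z 0 0 * Z 1 2) + Z 0 2 * Z 1 0) := by
      rw [hZi, Matrix.smul_apply, hadj]; simp
    have jac : (-(Z 0 0 * Z 1 2) + Z 0 2 * Z 0 1) ^ 2
        - (Z 0 0 * Z 2 2 - Z 0 2 * Z 0 2) * (Z 0 0 * Z 1 1 - Z 0 1 * Z 0 1)
        = -(Z 0 0 * Z.det) := by
      rw [Matrix.det_fin_three]
      simp only [h10, h20, h21]
      ring
    calc ((-Z⁻¹) 1 2) ^ 2 - (-Z⁻¹) 1 1 * (-Z⁻¹) 2 2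
        = ((-(Z 0 0 * Z 1 2) + Z 0 2 * Z 0 1) ^ 2
            - (Z 0 0 * Z 2 2 - Z 0 2 * Z 0 2) * (Z 0 0 * Z 1 1 - Z 0 1 * Z 0 1))
            * (Z.det⁻¹ * Z.det⁻¹) := by
          rw [Matrix.neg_apply, Matrix.neg_apply, Matrix.neg_apply, h11, h22, h12]
          simp only [h10, h20, h21]
          ring
      _ = (-(Z 0 0 * Z.det)) * (Z.det⁻¹ * Z.det⁻¹) := by rw [jac]
      _ = -(Z 0 0 / Z.det) := by field_simp
  have hdetA : (-Z⁻¹).det = -(Z.det)⁻¹ := by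
    rw [Matrix.det_neg, Matrix.det_nonsing_inv, Ring.inverse_eq_inv]
    norm_num
  have hA3 : (-Z⁻¹).det / (((-Z⁻¹) 1 2) ^ 2 - (-Z⁻¹) 1 1 * (-Z⁻¹) 2 2) = (Z 0 0)⁻¹ := by
    rw [hdetA, hA4, neg_div_neg_eq, div_div_eq_mul_div, inv_mul_cancel₀ hdet, one_div]
  -- diagonal positivity of Im (-Z⁻¹)
  have i00 : 0 < ((-Z⁻¹) 0 0).im := by
    have := hNpd.dotProduct_mulVec_pos e0ne
    simpa [dotProduct, Matrix.mulVec, Fin.sum_univ_three, Matrix.map_apply] using this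
  have i22 : 0 < ((-Z⁻¹) 2 2).im := by
    have := hNpd.dotProduct_mulVec_pos e2ne
    simpa [dotProduct, Matrix.mulVec, Fin.sum_univ_three, Matrix.map_apply] using this
  rw [hA1] at i00
  rw [hA5] at i22
  have h32 : 0 < (Z.det / (Z 1 1 * Z 2 2 - Z 1 2 ^ 2)).im := by
    have hlt : ((Z 1 1 * Z 2 2 - Z 1 2 ^ 2) / Z.det).im < 0 := by
      simp only [Complex.neg_im] at i00; linarith
    have := im_inv_pos_of_im_neg hlt
    rwa [inv_div] at this
  have h31 : 0 < (Z.det / (Z 0 0 * Z 1 1 - Z 0 1 ^ 2)).im := by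
    have hlt : ((Z 0 0 * Z 1 1 - Z 0 1 ^ 2) / Z.det).im < 0 := by
      simp only [Complex.neg_im] at i22; linarith
    have := im_inv_pos_of_im_neg hlt
    rwa [inv_div] at this
  -- Schur quotients
  have h21h := im_schur y1 y2 m01
  have h22h : 0 < ((Z 0 0 * Z 1 1 - Z 0 1 ^ 2) / Z 1 1).im := by
    have := im_schur y2 y1 (by rw [mul_comm]; exact m01)
    rwa [mul_comm (Z 1 1) (Z 0 0)] at this
  have h23h := im_schur y2 y3 m12
  have h24h : 0 < ((Z 1 1 * Z 2 2 - Z 1 2 ^ 2) / Z 2 2).im := by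
    have := im_schur y3 y2 (by rw [mul_comm]; exact m12)
    rwa [mul_comm (Z 2 2) (Z 1 1)] at this
  -- WZW entries
  have w00 : (antidiagW * Z * antidiagW) 0 0 = Z 2 2 := by
    simp [antidiagW, Matrix.mul_apply, Fin.sum_univ_three, Matrix.vecMul, Matrix.vecHead,
      Matrix.vecTail, dotProduct]
  have w01 : (antidiagW * Z * antidiagW) 0 1 = Z 1 2 := by
    simp [antidiagW, Matrix.mul_apply, Fin.sum_univ_three, Matrix.vecMul, Matrix.vecHead,
      Matrix.vecTail, dotProduct, h21]
  have w11 : (antidiagW * Z * antidiagW) 1 1 = Z 1 1 := by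
    simp [antidiagW, Matrix.mul_apply, Fin.sum_univ_three, Matrix.vecMul, Matrix.vecHead,
      Matrix.vecTail, dotProduct]
  have w12 : (antidiagW * Z * antidiagW) 1 2 = Z 0 1 := by
    simp [antidiagW, Matrix.mul_apply, Fin.sum_univ_three, Matrix.vecMul, Matrix.vecHead,
      Matrix.vecTail, dotProduct, h10]
  have w22 : (antidiagW * Z * antidiagW) 2 2 = Z 0 0 := by
    simp [antidiagW, Matrix.mul_apply, Fin.sum_univ_three, Matrix.vecMul, Matrix.vecHead,
      Matrix.vecTail, dotProduct]
  have wdet : (antidiagW * Z * antidiagW).det = Z.det := by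
    rw [Matrix.det_mul, Matrix.det_mul]
    norm_num [antidiagW, Matrix.det_fin_three, Matrix.cons_val_two, Matrix.vecHead, Matrix.vecTail]
  have hB2 : -((antidiagW * Z * antidiagW) 0 0 * (antidiagW * Z * antidiagW) 1 1
      - ((antidiagW * Z * antidiagW) 0 1) ^ 2) = -(Z 1 1 * Z 2 2 - Z 1 2 ^ 2) := by
    rw [w00, w11, w01]; ring
  have hB4 : ((antidiagW * Z * antidiagW) 1 2) ^ 2 - (antidiagW * Z * antidiagW) 1 1
      * (antidiagW * Z * antidiagW) 2 2 = -(Z 0 0 * Z 1 1 - Z 0 1 ^ 2) := by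
    rw [w12, w11, w22]; ring
  have hB3 : (antidiagW * Z * antidiagW).det / (((antidiagW * Z * antidiagW) 1 2) ^ 2
      - (antidiagW * Z * antidiagW) 1 1 * (antidiagW * Z * antidiagW) 2 2)
      = -(Z.det / (Z 0 0 * Z 1 1 - Z 0 1 ^ 2)) := by
    rw [wdet, hB4, div_neg]
  rw [siegelPower, siegelPower, hA2, hA3, hA4, hA1, hB2, hB3, hB4, w00]
  exact scalar_main (Z 0 0) (Z 1 1) (Z 2 2) (Z 0 0 * Z 1 1 - Z 0 1 ^ 2)
    (Z 1 1 * Z 2 2 - Z 1 2 ^ 2) Z.det y1 y2 y3 h21h h22h h23h h24h h31 h32 s₁ s₂ s₃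
end

section
/- Fix k ∈ ℝ. Consider the following three bijections of ℂ³: w : (s, t, u) ↦ (t, s, k − s − t − u); a : (s, t, u) ↦ (s + t − 1/2, 1 − t, t + u − 1/2); c : (s, t, u) ↦ (1 − t, 1 − s, s + t + u − 1). The subgroup of the group of bijections of ℂ³ (under composition) generated by {w, a, c} is isomorphic to the dihedral group of order 12. -/
/-- Helper: a monoid hom from `DihedralGroup 6` given elements satisfying the dihedral
relations. -/
def myD6Hom {G : Type*} [Group G] (w ρ : G) (h2 : w * w = 1) (h6 : ρ ^ 6 = 1)
    (hcomm : ρ * w = w * ρ⁻¹) : DihedralGroup 6 →* G where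
  toFun x := match x with
    | DihedralGroup.r i => ρ ^ i.val
    | DihedralGroup.sr i => w * ρ ^ i.val
  map_one' := by
    show ρ ^ (0 : ZMod 6).val = 1
    simp
  map_mul' := by
    have key : ∀ i j : ZMod 6, ρ ^ (i + j).val = ρ ^ i.val * ρ ^ j.val := by
      intro i j
      rw [ZMod.val_add, ← pow_eq_pow_mod _ h6, pow_add]
    have key2 : ∀ i j : ZMod 6, ρ ^ (j - i).val = (ρ ^ i.val)⁻¹ * ρ ^ j.val := by
      intro i j
      rw [eq_inv_mul_iff_mul_eq, ← key]
      congr 1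
      ring
    have wcomm : ∀ m : ℕ, ρ ^ m * w = w * (ρ ^ m)⁻¹ := by
      intro m
      induction m with
      | zero => simp
      | succ n ih =>
        rw [pow_succ, mul_assoc, hcomm, ← mul_assoc, ih, mul_assoc, ← mul_inv_rev,
          pow_mul_comm']
    rintro (i | i) (j | j)
    · exact key i j
    · show w * ρ ^ (j - i).val = ρ ^ i.val * (w * ρ ^ j.val)
      rw [key2, ← mul_assoc, ← mul_assoc, ← wcomm]
    · show w * ρ ^ (i + j).val = w * ρ ^ i.val * ρ ^ j.val
      rw [key, mul_assoc]
    · show ρ ^ (j - i).val = w * ρ ^ i.val * (w * ρ ^ j.val)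
      rw [key2, mul_assoc, ← mul_assoc (ρ ^ i.val), wcomm, ← mul_assoc, ← mul_assoc, h2,
        one_mul]

/-- Fix `k ∈ ℝ`. The subgroup of the group of bijections of `ℂ³`
generated by the three parameter transformations
`w : (s,t,u) ↦ (t, s, k−s−t−u)`, `a : (s,t,u) ↦ (s+t−1/2, 1−t, t+u−1/2)` and
`c : (s,t,u) ↦ (1−t, 1−s, s+t+u−1)` is isomorphic to the dihedral group of order 12. -/
theorem stmt_12 (k : ℝ) (w a c : Equiv.Perm (ℂ × ℂ × ℂ))
    (hw : ∀ p : ℂ × ℂ × ℂ, w p = (p.2.1, p.1, (k : ℂ) - p.1 - p.2.1 - p.2.2))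
    (ha : ∀ p : ℂ × ℂ × ℂ, a p = (p.1 + p.2.1 - 1 / 2, 1 - p.2.1, p.2.1 + p.2.2 - 1 / 2))
    (hc : ∀ p : ℂ × ℂ × ℂ, c p = (1 - p.2.1, 1 - p.1, p.1 + p.2.1 + p.2.2 - 1)) :
    Nonempty ((Subgroup.closure {w, a, c} : Subgroup (Equiv.Perm (ℂ × ℂ × ℂ))) ≃*
      DihedralGroup 6) := by
  have h2 : w * w = 1 := by
    apply Equiv.ext; rintro ⟨s, t, u⟩
    simp only [Equiv.Perm.mul_apply, hw, Equiv.Perm.one_apply, Prod.mk.injEq]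
    refine ⟨trivial, trivial, by ring⟩
  have h6 : (w * a) ^ 6 = 1 := by
    apply Equiv.ext; rintro ⟨s, t, u⟩
    simp only [pow_succ, pow_zero, one_mul, Equiv.Perm.mul_apply, hw, ha,
      Equiv.Perm.one_apply, Prod.mk.injEq]
    refine ⟨by ring, by ring, by ring⟩
  have E : (w * a) * w * (w * a) = w := by
    apply Equiv.ext; rintro ⟨s, t, u⟩
    simp only [Equiv.Perm.mul_apply, hw, ha, Prod.mk.injEq]
    refine ⟨by ring, by ring, by ring⟩
  have hcomm : (w * a) * w = w * (w * a)⁻¹ := by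
    calc (w * a) * w = (w * a) * w * (w * a) * (w * a)⁻¹ := by group
    _ = w * (w * a)⁻¹ := by rw [E]
  have hc3 : c = w * (w * a) ^ 3 := by
    apply Equiv.ext; rintro ⟨s, t, u⟩
    simp only [pow_succ, pow_zero, one_mul, Equiv.Perm.mul_apply, hw, ha, hc,
      Prod.mk.injEq]
    refine ⟨by ring, by ring, by ring⟩
  set f : DihedralGroup 6 →* Equiv.Perm (ℂ × ℂ × ℂ) := myD6Hom w (w * a) h2 h6 hcomm with hf
  have hfr : ∀ i : ZMod 6, f (DihedralGroup.r i) = (w * a) ^ i.val := fun _ => rfl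
  have hfsr : ∀ i : ZMod 6, f (DihedralGroup.sr i) = w * (w * a) ^ i.val := fun _ => rfl
  -- the twelve candidate images are pairwise distinct; in particular `f` is injective
  have hne : ∀ m : ℕ, 0 < m → m < 6 → (w * a) ^ m ≠ 1 := by
    intro m h0 h6' hx
    have h := congrArg (fun e : Equiv.Perm (ℂ × ℂ × ℂ) => e ((1 : ℂ), (2 : ℂ), (4 : ℂ))) hx
    interval_cases m <;>
      simp only [pow_succ, pow_zero, one_mul, Equiv.Perm.mul_apply, hw, ha,
        Equiv.Perm.one_apply, Prod.mk.injEq] at h <;> norm_num at h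
  have hne2 : ∀ m : ℕ, m < 6 → w * (w * a) ^ m ≠ 1 := by
    intro m h6' hx
    have h := congrArg (fun e : Equiv.Perm (ℂ × ℂ × ℂ) => e ((1 : ℂ), (2 : ℂ), (4 : ℂ))) hx
    interval_cases m <;>
      simp only [pow_succ, pow_zero, one_mul, mul_one, Equiv.Perm.mul_apply, hw, ha,
        Equiv.Perm.one_apply, Prod.mk.injEq] at h <;> norm_num at h
  have hinj : Function.Injective f := by
    rw [injective_iff_map_eq_one]
    rintro (i | i) hx
    · rcases Nat.eq_zero_or_pos i.val with h0 | h0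
      · rw [show i = 0 from (ZMod.val_eq_zero i).mp h0]
        rfl
      · exact absurd (hfr i ▸ hx) (hne i.val h0 (ZMod.val_lt i))
    · exact absurd (hfsr i ▸ hx) (hne2 i.val (ZMod.val_lt i))
  have hrange : (Subgroup.closure {w, a, c} : Subgroup (Equiv.Perm (ℂ × ℂ × ℂ))) = f.range := by
    apply le_antisymm
    · rw [Subgroup.closure_le]
      have hv0 : (0 : ZMod 6).val = 0 := rfl
      have hv1 : (1 : ZMod 6).val = 1 := rfl
      have hv3 : (3 : ZMod 6).val = 3 := rfl
      have haw : w * (w * a) ^ 1 = a := by rw [pow_one, ← mul_assoc, h2, one_mul]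
      intro x hx
      simp only [Set.mem_insert_iff, Set.mem_singleton_iff] at hx
      rcases hx with rfl | rfl | rfl
      · exact ⟨DihedralGroup.sr 0, by rw [hfsr, hv0, pow_zero, mul_one]⟩
      · exact ⟨DihedralGroup.sr 1, by rw [hfsr, hv1, haw]⟩
      · exact ⟨DihedralGroup.sr 3, by rw [hfsr, hv3, ← hc3]⟩
    · rintro x ⟨y, rfl⟩
      have hwm : w ∈ Subgroup.closure {w, a, c} := Subgroup.subset_closure (by simp)
      have ham : a ∈ Subgroup.closure {w, a, c} := Subgroup.subset_closure (by simp)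
      cases y with
      | r i => exact hfr i ▸ pow_mem (mul_mem hwm ham) _
      | sr i => exact hfsr i ▸ mul_mem hwm (pow_mem (mul_mem hwm ham) _)
  exact ⟨(MulEquiv.subgroupCongr hrange).trans (MonoidHom.ofInjective hinj).symm⟩
end

section
/- Let Y = ((y₁, y), (y, y₂)) be a real symmetric positive definite 2×2 matrix and let s ∈ ℂ with Re(s) > 1. Set τ_Y = y/y₁ + i·√(det Y)/y₁ ∈ ℂ. Then ∑_{v ∈ ℤ²∖{0}} (vᵀYv)^{−s} = y₁^{−s} · ∑_{(a,c) ∈ ℤ²∖{0}} |a + c·τ_Y|^{−2s}, both series converging absolutely. -/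
/-- Let `Y = ((y₁,y),(y,y₂))` be real symmetric positive definite and
`Re s > 1`. With `τ_Y = y/y₁ + i√(det Y)/y₁`, both series converge absolutely and
`∑_{v ∈ ℤ²∖{0}} (vᵀYv)^{−s} = y₁^{−s} · ∑_{(a,c) ∈ ℤ²∖{0}} |a + c·τ_Y|^{−2s}`. -/
theorem stmt_15 (y₁ y y₂ : ℝ) (hpd : (!![y₁, y; y, y₂]).PosDef) (s : ℂ) (hs : 1 < s.re) :
    Summable (fun v : {v : ℤ × ℤ // v ≠ 0} =>
      ‖(((y₁ * (v.1.1 : ℝ) ^ 2 + 2 * y * (v.1.1 : ℝ) * (v.1.2 : ℝ) + y₂ * (v.1.2 : ℝ) ^ 2 : ℝ) :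
          ℂ)) ^ (-s)‖) ∧
    Summable (fun v : {v : ℤ × ℤ // v ≠ 0} =>
      ‖((‖(v.1.1 : ℂ) + (v.1.2 : ℂ) *
            (((y / y₁ : ℝ) : ℂ) + ((Real.sqrt (y₁ * y₂ - y ^ 2) / y₁ : ℝ) : ℂ) * Complex.I)‖ :
          ℂ)) ^ (-(2 * s))‖) ∧
    (∑' v : {v : ℤ × ℤ // v ≠ 0},
        (((y₁ * (v.1.1 : ℝ) ^ 2 + 2 * y * (v.1.1 : ℝ) * (v.1.2 : ℝ) + y₂ * (v.1.2 : ℝ) ^ 2 : ℝ) :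
          ℂ)) ^ (-s)) =
      ((y₁ : ℂ)) ^ (-s) *
        ∑' v : {v : ℤ × ℤ // v ≠ 0},
          ((‖(v.1.1 : ℂ) + (v.1.2 : ℂ) *
              (((y / y₁ : ℝ) : ℂ) + ((Real.sqrt (y₁ * y₂ - y ^ 2) / y₁ : ℝ) : ℂ) * Complex.I)‖ :
            ℂ)) ^ (-(2 * s)) := by
  have hy₁ : 0 < y₁ := by
    have h := hpd.dotProduct_mulVec_pos (x := ![1, 0]) (by
      intro h; simpa using congrFun h 0)
    simpa [Matrix.mulVec, dotProduct, Fin.sum_univ_two] using h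
  have hdet : 0 < y₁ * y₂ - y ^ 2 := by
    have h := hpd.det_pos
    simp [Matrix.det_fin_two_of] at h
    nlinarith
  set t : ℝ := Real.sqrt (y₁ * y₂ - y ^ 2) / y₁ with ht
  have ht0 : 0 < t := div_pos (Real.sqrt_pos.mpr hdet) hy₁
  set τ : ℂ := ((y / y₁ : ℝ) : ℂ) + ((t : ℝ) : ℂ) * Complex.I with hτ
  set Q : ℤ × ℤ → ℝ := fun v =>
    y₁ * (v.1 : ℝ) ^ 2 + 2 * y * (v.1 : ℝ) * (v.2 : ℝ) + y₂ * (v.2 : ℝ) ^ 2 with hQdef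
  have hQpos : ∀ v : ℤ × ℤ, v ≠ 0 → 0 < Q v := by
    intro v hv
    have hx : (![(v.1 : ℝ), (v.2 : ℝ)]) ≠ 0 := by
      intro h
      apply hv
      have h0 := congrFun h 0
      have h1 := congrFun h 1
      simp only [Matrix.cons_val_zero, Matrix.cons_val_one, Matrix.head_cons, Pi.zero_apply,
        Int.cast_eq_zero] at h0 h1
      exact Prod.ext h0 h1
    have h := hpd.dotProduct_mulVec_pos hx
    simp only [Matrix.mulVec, dotProduct, Fin.sum_univ_two, Matrix.cons_val_zero,
      Matrix.cons_val_one, Matrix.head_cons, Matrix.cons_val', Matrix.empty_val',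
      Matrix.cons_val_fin_one, Matrix.of_apply, star_trivial, Matrix.vecHead, Matrix.vecTail] at h
    simp only [hQdef]
    nlinarith [h]
  have hnormsq : ∀ v : ℤ × ℤ,
      y₁ * ‖(v.1 : ℂ) + (v.2 : ℂ) * τ‖ ^ 2 = Q v := by
    intro v
    have h2 : ‖(v.1 : ℂ) + (v.2 : ℂ) * τ‖ ^ 2
        = ((v.1 : ℝ) + (v.2 : ℝ) * (y / y₁)) ^ 2 + ((v.2 : ℝ) * t) ^ 2 := by
      rw [Complex.sq_norm, Complex.normSq_apply]
      simp [hτ]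
      ring
    have h3 : Real.sqrt (y₁ * y₂ - y ^ 2) ^ 2 = y₁ * y₂ - y ^ 2 := Real.sq_sqrt hdet.le
    rw [h2, hQdef, ht]
    field_simp
    linear_combination ((v.2 : ℝ) ^ 2) * h3
  -- positivity of the norm
  have hrpos : ∀ v : ℤ × ℤ, v ≠ 0 → 0 < ‖(v.1 : ℂ) + (v.2 : ℂ) * τ‖ := by
    intro v hv
    rcases (norm_nonneg ((v.1 : ℂ) + (v.2 : ℂ) * τ)).lt_or_eq with h | h
    · exact h
    · exfalso
      have := hnormsq v
      rw [← h] at this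
      simp at this
      nlinarith [hQpos v hv]
  -- key pointwise identity
  have key : ∀ v : ℤ × ℤ, v ≠ 0 →
      ((Q v : ℝ) : ℂ) ^ (-s)
        = (y₁ : ℂ) ^ (-s) * ((‖(v.1 : ℂ) + (v.2 : ℂ) * τ‖ : ℝ) : ℂ) ^ (-(2 * s)) := by
    intro v hv
    set r : ℝ := ‖(v.1 : ℂ) + (v.2 : ℂ) * τ‖ with hrdef
    have hr0 : 0 < r := hrpos v hv
    have hbase : ((Q v : ℝ) : ℂ) = ((y₁ * (r * r) : ℝ) : ℂ) := by
      rw [← hnormsq v]; push_cast; ring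
    rw [hbase, Complex.ofReal_mul, Complex.mul_cpow_ofReal_nonneg hy₁.le (mul_nonneg hr0.le hr0.le)]
    congr 1
    rw [Complex.ofReal_mul, Complex.mul_cpow_ofReal_nonneg hr0.le hr0.le,
      ← Complex.cpow_add _ _ (by exact_mod_cast hr0.ne')]
    ring_nf
  -- the upper half plane point
  set z : UpperHalfPlane := ⟨τ, by simp [hτ, ht0]⟩ with hz
  set k : ℝ := 2 * s.re with hk
  have hk2 : 2 < k := by simp [hk]; linarith
  -- summability of the dominating series
  have hdom : Summable (fun v : {v : ℤ × ℤ // v ≠ 0} =>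
      EisensteinSeries.r z ^ (-k) * ‖![(v.1.2 : ℤ), (v.1.1 : ℤ)]‖ ^ (-k)) := by
    have h1 : Summable (fun x : Fin 2 → ℤ =>
        EisensteinSeries.r z ^ (-k) * ‖x‖ ^ (-k)) :=
      (EisensteinSeries.summable_one_div_norm_rpow hk2).mul_left _
    have h2 := (h1.comp_injective (i := fun v : ℤ × ℤ => ![(v.2 : ℤ), (v.1 : ℤ)]) ?_)
    · exact h2.subtype _
    · intro a b hab
      have h0 := congrFun hab 0
      have h1' := congrFun hab 1
      simp at h0 h1'
      exact Prod.ext h1' h0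
  -- norm of the Eisenstein-type term
  have hgnorm : ∀ v : ℤ × ℤ, v ≠ 0 →
      ‖(((‖(v.1 : ℂ) + (v.2 : ℂ) * τ‖ : ℝ) : ℂ)) ^ (-(2 * s))‖
        = ‖(v.1 : ℂ) + (v.2 : ℂ) * τ‖ ^ (-k) := by
    intro v hv
    rw [Complex.norm_cpow_eq_rpow_re_of_pos (hrpos v hv)]
    congr 1
    simp [hk]
  -- bound for each term
  have hbound : ∀ v : {v : ℤ × ℤ // v ≠ 0},
      ‖(v.1.1 : ℂ) + (v.1.2 : ℂ) * τ‖ ^ (-k)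
        ≤ EisensteinSeries.r z ^ (-k) * ‖![(v.1.2 : ℤ), (v.1.1 : ℤ)]‖ ^ (-k) := by
    intro v
    have hb := EisensteinSeries.summand_bound z (k := k) (by linarith) ![(v.1.2 : ℤ), (v.1.1 : ℤ)]
    have he : ‖((![(v.1.2 : ℤ), (v.1.1 : ℤ)] 0 : ℤ) * (z : ℂ)
        + (![(v.1.2 : ℤ), (v.1.1 : ℤ)] 1 : ℤ))‖
        = ‖(v.1.1 : ℂ) + (v.1.2 : ℂ) * τ‖ := by
      congr 1
      simp [hz]
      ring
    rwa [he] at hb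
  -- summability of the second series
  have hgsum : Summable (fun v : {v : ℤ × ℤ // v ≠ 0} =>
      ‖(((‖(v.1.1 : ℂ) + (v.1.2 : ℂ) * τ‖ : ℝ) : ℂ)) ^ (-(2 * s))‖) := by
    refine Summable.of_nonneg_of_le (fun v => norm_nonneg _) (fun v => ?_) hdom
    rw [hgnorm v.1 v.2]
    exact hbound v
  refine ⟨?_, hgsum, ?_⟩
  · refine (hgsum.mul_left ‖(y₁ : ℂ) ^ (-s)‖).congr fun v => ?_
    rw [← norm_mul, ← key v.1 v.2]
  · rw [← tsum_mul_left]
    exact tsum_congr fun v => key v.1 v.2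
end
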